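/- arXiv:0706.1326 — 5 statements merged into one kernel-verified Lean document; each statement's English description precedes it below -/
import Mathlib

section
/- Let m be a positive integer. If every countable ultrahomogeneous metric space with all distances in [0,1]_{2(m²+m)} into which every countable metric space with distances in [0,1]_{2(m²+m)} embeds isometrically is 1/(2(m²+m))-indivisible, then every countable ultrahomogeneous metric space S_m with all distances in [0,1]_m into which every countable metric space with distances in [0,1]_m embeds isometrically is indivisible. -/
set_option linter.unusedVariables false


open Metric

/-- A metric space is ultrahomogeneous if every isometry between two finite
subspaces extends to a surjective self-isometry of the whole space. -/
def IsUltrahomogeneous (X : Type*) [MetricSpace X] : Prop :=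
  ∀ F : Set X, F.Finite → ∀ φ : F → X, Isometry φ →
    ∃ ψ : X ≃ᵢ X, ∀ x : F, ψ x = φ x

/-- A metric space `X` is `ε`-indivisible if for every finite coloring there
is a color `i` and a subset `Y ⊆ X` isometric to `X` with every point of `Y`
within distance `ε` of the `i`-th color class. -/
def EpsIndivisible (X : Type*) [MetricSpace X] (ε : ℝ) : Prop :=
  ∀ k : ℕ, 0 < k → ∀ χ : X → Fin k, ∃ i : Fin k, ∃ e : X → X, Isometry e ∧
    ∀ z : X, ∃ x : X, χ x = i ∧ dist (e z) x ≤ ε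

/-- Approximate indivisibility (oscillation stability): `ε`-indivisible for
every `ε > 0`. -/
def ApproxIndivisible (X : Type*) [MetricSpace X] : Prop :=
  ∀ ε : ℝ, 0 < ε → EpsIndivisible X ε

/-- Exact indivisibility: some color class contains an isometric copy of `X`. -/
def Indivisible (X : Type*) [MetricSpace X] : Prop :=
  ∀ k : ℕ, 0 < k → ∀ χ : X → Fin k, ∃ i : Fin k, ∃ e : X → X, Isometry e ∧
    ∀ z : X, χ (e z) = i

/-- The Urysohn sphere: complete, separable, ultrahomogeneous, of diameter at
most `1`, and universal for separable metric spaces of diameter at most `1`. -/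
def IsUrysohnSphere (S : Type) [MetricSpace S] : Prop :=
  CompleteSpace S ∧ TopologicalSpace.SeparableSpace S ∧ IsUltrahomogeneous S ∧
  (∀ x y : S, dist x y ≤ 1) ∧
  ∀ (Y : Type) [MetricSpace Y], TopologicalSpace.SeparableSpace Y →
    (∀ a b : Y, dist a b ≤ 1) → ∃ f : Y → S, Isometry f

/-- The rational Urysohn sphere: countable, ultrahomogeneous, with distances in
`ℚ ∩ [0,1]`, universal for countable metric spaces with distances in `ℚ ∩ [0,1]`. -/
def IsRationalUrysohnSphere (S : Type) [MetricSpace S] : Prop :=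
  Countable S ∧ IsUltrahomogeneous S ∧
  (∀ x y : S, ∃ q : ℚ, 0 ≤ q ∧ q ≤ 1 ∧ dist x y = q) ∧
  ∀ (Y : Type) [MetricSpace Y], Countable Y →
    (∀ a b : Y, ∃ q : ℚ, 0 ≤ q ∧ q ≤ 1 ∧ dist a b = q) →
    ∃ f : Y → S, Isometry f

/-- `[0,1]_m = {k/m : 0 ≤ k ≤ m}`. -/
def distSetM (m : ℕ) : Set ℝ := {d | ∃ k : ℕ, k ≤ m ∧ d = (k : ℝ) / m}

/-- The space `S_m`: countable, ultrahomogeneous, with distances in `[0,1]_m`,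
universal for countable metric spaces with distances in `[0,1]_m`. -/
def IsUrysohnSphereM (m : ℕ) (S : Type) [MetricSpace S] : Prop :=
  Countable S ∧ IsUltrahomogeneous S ∧
  (∀ x y : S, dist x y ∈ distSetM m) ∧
  ∀ (Y : Type) [MetricSpace Y], Countable Y →
    (∀ a b : Y, dist a b ∈ distSetM m) → ∃ f : Y → S, Isometry f

namespace Stmt9Aux

open Finset
open scoped Classical

/-- Codes for one-point extension requirements. -/
noncomputable def enum (N : ℕ) : ℕ → (j : ℕ) × (Fin j → Fin N) :=
  haveI : Nonempty ((j : ℕ) × (Fin j → Fin N)) := ⟨⟨0, Fin.elim0⟩⟩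
  (exists_surjective_nat _).choose

lemma enum_surj (N : ℕ) : Function.Surjective (enum N) := by
  haveI : Nonempty ((j : ℕ) × (Fin j → Fin N)) := ⟨⟨0, Fin.elim0⟩⟩
  unfold enum
  exact (exists_surjective_nat _).choose_spec

/-- the proposed distances of a new point, from a code -/
def phiF {N : ℕ} (c : (j : ℕ) × (Fin j → Fin N)) (s : ℕ) : ℕ :=
  if hs : s < c.1 then (c.2 ⟨s, hs⟩).val + 1 else 1

/-- whether a code gives a valid (Katětov) requirement over `{0,...,n-1}`
with respect to the partial metric `dd` -/
def okF {N : ℕ} (n : ℕ) (dd : ℕ → ℕ → ℕ) (c : (j : ℕ) × (Fin j → Fin N)) : Prop :=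
  c.1 ≤ n ∧ ∀ s < c.1, ∀ t < c.1,
    phiF c s ≤ phiF c t + dd t s ∧ dd s t ≤ phiF c s + phiF c t

/-- Katětov extension: `min (N, min_{s ∈ F} (ψ s + dd s i))`. -/
def kext (N : ℕ) (F : Finset ℕ) (ψ : ℕ → ℕ) (dd : ℕ → ℕ → ℕ) (i : ℕ) : ℕ :=
  F.fold min N fun s => ψ s + dd s i

noncomputable def rowF (N : ℕ) (n : ℕ) (dd : ℕ → ℕ → ℕ)
    (c : (j : ℕ) × (Fin j → Fin N)) (i : ℕ) : ℕ :=
  kext N (Finset.range (if okF n dd c then c.1 else 0)) (phiF c) dd i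

/-- the distances from point `n` to the previous points -/
noncomputable def drow (N : ℕ) : (n : ℕ) → ℕ → ℕ
  | n => fun i => rowF N n
      (fun x y => if h : x ≠ y ∧ max x y < n then drow N (max x y) (min x y) else 0)
      (enum N (Nat.unpair n).2) i
  termination_by n => n
  decreasing_by exact h.2

/-- the distance function (times `N`) on the generic space -/
noncomputable def nd (N : ℕ) (x y : ℕ) : ℕ :=
  if x = y then 0 else drow N (max x y) (min x y)

lemma nd_self (N x : ℕ) : nd N x x = 0 := by simp [nd]

lemma nd_comm (N x y : ℕ) : nd N x y = nd N y x := by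
  unfold nd
  rcases eq_or_ne x y with rfl | h
  · simp
  · simp [h, h.symm, Nat.max_comm, Nat.min_comm]

lemma nd_eq_drow (N x y : ℕ) (h : y < x) : nd N x y = drow N x y := by
  have : x ≠ y := by omega
  simp [nd, this, Nat.max_eq_left h.le, Nat.min_eq_right h.le]

lemma drow_eq (N n i : ℕ) (hi : i < n) :
    drow N n i = rowF N n (nd N) (enum N (Nat.unpair n).2) i := by
  rw [drow]
  set c := enum N (Nat.unpair n).2 with hc
  set dd : ℕ → ℕ → ℕ := fun x y => if h : x ≠ y ∧ max x y < n then drow N (max x y) (min x y) else 0 with hdd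
  have hdd_eq : ∀ x y, x < n → y < n → dd x y = nd N x y := by
    intro x y hx hy
    rcases eq_or_ne x y with rfl | hxy
    · simp [hdd, nd]
    · have hm : max x y < n := by omega
      rw [hdd]
      simp only
      rw [dif_pos ⟨hxy, hm⟩]
      unfold nd
      rw [if_neg hxy]
  have hok : okF n dd c ↔ okF n (nd N) c := by
    unfold okF
    constructor
    · rintro ⟨h1, h2⟩
      refine ⟨h1, fun s hs t ht => ?_⟩
      have := h2 s hs t ht
      rwa [hdd_eq t s (lt_of_lt_of_le ht h1) (lt_of_lt_of_le hs h1),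
        hdd_eq s t (lt_of_lt_of_le hs h1) (lt_of_lt_of_le ht h1)] at this
    · rintro ⟨h1, h2⟩
      refine ⟨h1, fun s hs t ht => ?_⟩
      have := h2 s hs t ht
      rwa [← hdd_eq t s (lt_of_lt_of_le ht h1) (lt_of_lt_of_le hs h1),
        ← hdd_eq s t (lt_of_lt_of_le hs h1) (lt_of_lt_of_le ht h1)] at this
  show rowF N n dd c i = rowF N n (nd N) c i
  unfold rowF kext
  have hJ : (if okF n dd c then c.1 else 0) = (if okF n (nd N) c then c.1 else 0) := by
    by_cases h : okF n (nd N) c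
    · simp [h, hok.mpr h]
    · rw [if_neg h, if_neg (fun hh => h (hok.mp hh))]
  rw [hJ]
  apply Finset.fold_congr
  intro s hs
  rw [Finset.mem_range] at hs
  by_cases h : okF n (nd N) c
  · rw [if_pos h] at hs
    rw [hdd_eq s i (lt_of_lt_of_le hs h.1) hi]
  · rw [if_neg h] at hs; omega


section KextLemmas

variable {N : ℕ} {F : Finset ℕ} {ψ : ℕ → ℕ} {dd : ℕ → ℕ → ℕ} {i a b s0 D E : ℕ}

lemma kext_le_N : kext N F ψ dd i ≤ N := by
  unfold kext
  exact (Finset.fold_min_le _).mpr (Or.inl le_rfl)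

lemma one_le_kext (hN : 1 ≤ N) (hψ : ∀ s ∈ F, 1 ≤ ψ s) : 1 ≤ kext N F ψ dd i := by
  unfold kext
  exact (Finset.le_fold_min _).mpr ⟨hN, fun s hs => (hψ s hs).trans (Nat.le_add_right _ _)⟩

lemma kext_le_of_mem (hs : s0 ∈ F) : kext N F ψ dd i ≤ ψ s0 + dd s0 i := by
  unfold kext
  exact (Finset.fold_min_le _).mpr (Or.inr ⟨s0, hs, le_rfl⟩)

lemma kext_attain :
    kext N F ψ dd i = N ∨ ∃ s ∈ F, kext N F ψ dd i = ψ s + dd s i := by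
  have h : kext N F ψ dd i ≤ kext N F ψ dd i := le_rfl
  conv at h in (occs := 2) (kext N F ψ dd i) => skip
  rw [show (kext N F ψ dd i) = F.fold min N (fun s => ψ s + dd s i) from rfl] at h
  rw [Finset.fold_min_le _] at h
  rcases h with h | ⟨s, hs, h⟩
  · exact Or.inl (le_antisymm kext_le_N h)
  · exact Or.inr ⟨s, hs, le_antisymm (kext_le_of_mem hs) h⟩

lemma kext_eq_of_mem (hs0 : s0 ∈ F) (hd0 : dd s0 s0 = 0) (hψN : ψ s0 ≤ N)
    (hK : ∀ t ∈ F, ψ s0 ≤ ψ t + dd t s0) : kext N F ψ dd s0 = ψ s0 := by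
  refine le_antisymm ?_ ?_
  · have := kext_le_of_mem (N := N) (ψ := ψ) (dd := dd) (i := s0) hs0
    omega
  · unfold kext
    exact (Finset.le_fold_min _).mpr ⟨hψN, fun t ht => hK t ht⟩

lemma kext_le_add (hyp : ∀ s ∈ F, dd s a ≤ dd s b + D) :
    kext N F ψ dd a ≤ kext N F ψ dd b + D := by
  rcases kext_attain (i := b) (F := F) (ψ := ψ) (dd := dd) (N := N) with hb | ⟨s, hs, hb⟩
  · have := kext_le_N (N := N) (F := F) (ψ := ψ) (dd := dd) (i := a)
    omega
  · have h1 := kext_le_of_mem (N := N) (ψ := ψ) (dd := dd) (i := a) hs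
    have h2 := hyp s hs
    omega

lemma le_add_kext (hEN : E ≤ N)
    (hyp : ∀ s ∈ F, ∀ t ∈ F, E ≤ (ψ s + dd s a) + (ψ t + dd t b)) :
    E ≤ kext N F ψ dd a + kext N F ψ dd b := by
  rcases kext_attain (i := a) (F := F) (ψ := ψ) (dd := dd) (N := N) with ha | ⟨s, hs, ha⟩ <;>
    rcases kext_attain (i := b) (F := F) (ψ := ψ) (dd := dd) (N := N) with hb | ⟨t, ht, hb⟩
  · omega
  · omega
  · omega
  · have := hyp s hs t ht
    omega

end KextLemmas

lemma one_le_phiF {N : ℕ} (c : (j : ℕ) × (Fin j → Fin N)) (s : ℕ) : 1 ≤ phiF c s := by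
  unfold phiF
  split <;> omega

lemma phiF_le_N {N : ℕ} (hN : 1 ≤ N) (c : (j : ℕ) × (Fin j → Fin N)) (s : ℕ) :
    phiF c s ≤ N := by
  unfold phiF
  split
  · exact (c.2 ⟨s, by assumption⟩).2
  · exact hN

lemma drow_le_N (N n i : ℕ) : drow N n i ≤ N := by
  rw [drow]
  exact kext_le_N

lemma one_le_drow (N : ℕ) (hN : 1 ≤ N) (n i : ℕ) : 1 ≤ drow N n i := by
  rw [drow]
  exact one_le_kext hN (fun s _ => one_le_phiF _ s)

lemma nd_le_N (N x y : ℕ) : nd N x y ≤ N := by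
  unfold nd
  split
  · omega
  · exact drow_le_N _ _ _

lemma one_le_nd {N x y : ℕ} (hN : 1 ≤ N) (h : x ≠ y) : 1 ≤ nd N x y := by
  unfold nd
  rw [if_neg h]
  exact one_le_drow _ hN _ _

lemma nd_eq_zero_iff {N x y : ℕ} (hN : 1 ≤ N) : nd N x y = 0 ↔ x = y := by
  constructor
  · intro h
    by_contra hxy
    have := one_le_nd hN hxy
    omega
  · rintro rfl
    exact nd_self N x

lemma drow_tri_A {N : ℕ} (n a b : ℕ) (ha : a < n) (hb : b < n)
    (IH : ∀ x y z, x < n → y < n → z < n → nd N x z ≤ nd N x y + nd N y z) :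
    drow N n a ≤ drow N n b + nd N b a := by
  rw [drow_eq N n a ha, drow_eq N n b hb]
  unfold rowF
  apply kext_le_add
  intro s hs
  rw [Finset.mem_range] at hs
  have hsn : s < n := by
    by_cases h : okF n (nd N) (enum N (Nat.unpair n).2)
    · rw [if_pos h] at hs; exact lt_of_lt_of_le hs h.1
    · rw [if_neg h] at hs; omega
  exact IH s b a hsn hb ha

lemma drow_tri_B {N : ℕ} (n a b : ℕ) (ha : a < n) (hb : b < n)
    (IH : ∀ x y z, x < n → y < n → z < n → nd N x z ≤ nd N x y + nd N y z) :
    nd N a b ≤ drow N n a + drow N n b := by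
  rw [drow_eq N n a ha, drow_eq N n b hb]
  unfold rowF
  apply le_add_kext (nd_le_N N a b)
  intro s hs t ht
  rw [Finset.mem_range] at hs ht
  by_cases h : okF n (nd N) (enum N (Nat.unpair n).2)
  · rw [if_pos h] at hs ht
    have hsn : s < n := lt_of_lt_of_le hs h.1
    have htn : t < n := lt_of_lt_of_le ht h.1
    have h1 : nd N a b ≤ nd N a s + nd N s b := IH a s b ha hsn hb
    have h2 : nd N s b ≤ nd N s t + nd N t b := IH s t b hsn htn hb
    have h3 : nd N s t ≤ phiF (enum N (Nat.unpair n).2) s + phiF (enum N (Nat.unpair n).2) t :=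
      (h.2 s hs t ht).2
    have h4 : nd N a s = nd N s a := nd_comm _ _ _
    omega
  · rw [if_neg h] at hs; omega

lemma nd_triangle (N : ℕ) (x y z : ℕ) : nd N x z ≤ nd N x y + nd N y z := by
  suffices H : ∀ n, ∀ x y z : ℕ, x < n → y < n → z < n →
      nd N x z ≤ nd N x y + nd N y z by
    exact H (x + y + z + 1) x y z (by omega) (by omega) (by omega)
  intro n
  induction n with
  | zero => intro x y z hx; omega
  | succ n IH =>
    intro x y z hx hy hz
    rcases eq_or_ne x y with rfl | hxy
    · rw [nd_self]; omega
    rcases eq_or_ne y z with rfl | hyz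
    · rw [nd_self]; omega
    rcases eq_or_ne x z with rfl | hxz
    · rw [nd_self]; omega
    by_cases hxn : x < n
    · by_cases hyn : y < n
      · by_cases hzn : z < n
        · exact IH x y z hxn hyn hzn
        · -- z = n
          have hz' : z = n := by omega
          subst hz'
          rw [nd_comm N x z, nd_comm N y z, nd_eq_drow N z x hxn, nd_eq_drow N z y hyn]
          have := drow_tri_A (N := N) z x y hxn hyn IH
          have h4 : nd N y x = nd N x y := nd_comm _ _ _
          omega
      · -- y = n
        have hy' : y = n := by omega
        subst hy'
        have hzn : z < y := by omega
        have hxn' : x < y := by omega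
        rw [nd_comm N x y, nd_eq_drow N y x hxn', nd_eq_drow N y z hzn]
        exact drow_tri_B (N := N) y x z hxn' hzn IH
    · -- x = n
      have hx' : x = n := by omega
      subst hx'
      have hyn : y < x := by omega
      have hzn : z < x := by omega
      rw [nd_eq_drow N x z hzn, nd_eq_drow N x y hyn]
      have := drow_tri_A (N := N) x z y hzn hyn IH
      omega


/-! ### The extension property -/

lemma exists_ext (N : ℕ) (hN : 1 ≤ N) (J : ℕ) (ψ : ℕ → ℕ)
    (hb : ∀ s < J, 1 ≤ ψ s ∧ ψ s ≤ N)
    (hK : ∀ s < J, ∀ t < J, ψ s ≤ ψ t + nd N t s ∧ nd N s t ≤ ψ s + ψ t) :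
    ∃ u, J ≤ u ∧ ∀ s < J, nd N u s = ψ s := by
  classical
  set c : (j : ℕ) × (Fin j → Fin N) :=
    ⟨J, fun s => ⟨ψ s.1 - 1, by have := hb s.1 s.2; omega⟩⟩ with hcdef
  obtain ⟨b, hbenc⟩ := enum_surj N c
  set u := Nat.pair J b with hu
  have hJu : J ≤ u := Nat.left_le_pair J b
  have hcu : enum N (Nat.unpair u).2 = c := by rw [hu, Nat.unpair_pair]; exact hbenc
  have hphi : ∀ s < J, phiF c s = ψ s := by
    intro s hs
    unfold phiF
    rw [dif_pos (show s < c.1 from hs)]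
    have := hb s hs
    show (ψ s - 1) + 1 = ψ s
    omega
  have hok : okF u (nd N) c := by
    refine ⟨hJu, fun s hs t ht => ?_⟩
    rw [hphi s hs, hphi t ht]
    exact hK s hs t ht
  refine ⟨u, hJu, fun s hs => ?_⟩
  have hsu : s < u := lt_of_lt_of_le hs hJu
  rw [nd_eq_drow N u s hsu, drow_eq N u s hsu, hcu]
  unfold rowF
  rw [if_pos hok]
  have hmem : s ∈ Finset.range c.1 := Finset.mem_range.mpr hs
  rw [kext_eq_of_mem hmem (nd_self N s) ((hphi s hs).le.trans (hb s hs).2)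
    (fun t ht => ?_), hphi s hs]
  rw [Finset.mem_range] at ht
  rw [hphi s hs, hphi t ht]
  exact (hK s hs t ht).1

lemma exists_ext_finset (N : ℕ) (hN : 1 ≤ N) (F : Finset ℕ) (ψ : ℕ → ℕ)
    (hb : ∀ s ∈ F, 1 ≤ ψ s ∧ ψ s ≤ N)
    (hK : ∀ s ∈ F, ∀ t ∈ F, ψ s ≤ ψ t + nd N t s ∧ nd N s t ≤ ψ s + ψ t) :
    ∃ u, (∀ s ∈ F, s < u) ∧ ∀ s ∈ F, nd N u s = ψ s := by
  classical
  set ψ' : ℕ → ℕ := fun i => kext N F ψ (nd N) i with hψ'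
  set J := F.sup id + 1 with hJ
  have hFJ : ∀ s ∈ F, s < J := fun s hs =>
    Nat.lt_succ_of_le (Finset.le_sup (f := id) hs)
  have hψ'b : ∀ s, 1 ≤ ψ' s ∧ ψ' s ≤ N := fun s =>
    ⟨one_le_kext hN (fun t ht => (hb t ht).1), kext_le_N⟩
  have hψ'K : ∀ s t : ℕ, ψ' s ≤ ψ' t + nd N t s ∧ nd N s t ≤ ψ' s + ψ' t := by
    intro s t
    constructor
    · exact kext_le_add (fun a ha => nd_triangle N a t s)
    · refine le_add_kext (nd_le_N N s t) (fun a ha b hb' => ?_)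
      have h1 : nd N s t ≤ nd N s a + nd N a t := nd_triangle N s a t
      have h2 : nd N a t ≤ nd N a b + nd N b t := nd_triangle N a b t
      have h3 : nd N a b ≤ ψ a + ψ b := (hK a ha b hb').2
      have h4 : nd N s a = nd N a s := nd_comm N s a
      omega
  obtain ⟨u, hJu, hu⟩ := exists_ext N hN J ψ' (fun s _ => hψ'b s)
    (fun s _ t _ => hψ'K s t)
  refine ⟨u, fun s hs => lt_of_lt_of_le (hFJ s hs) hJu, fun s hs => ?_⟩
  rw [hu s (hFJ s hs)]
  exact kext_eq_of_mem hs (nd_self N s) (hb s hs).2 (fun t ht => (hK s hs t ht).1)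

/-! ### The space `Sp N` -/

def Sp (N : ℕ) : Type := ℕ

noncomputable instance (N : ℕ) : MetricSpace (Sp N) where
  dist x y := (nd (N + 1) x y : ℝ) / (N + 1)
  dist_self x := by simp [nd_self]; left; exact nd_self _ _
  dist_comm x y := by simp [nd_comm (N + 1) x y]
  dist_triangle x y z := by
    show (nd (N+1) x z : ℝ)/(N+1) ≤ (nd (N+1) x y : ℝ)/(N+1) + (nd (N+1) y z : ℝ)/(N+1)
    rw [← add_div]
    have h := nd_triangle (N + 1) x y z
    have hpos : (0 : ℝ) < (N : ℝ) + 1 := by positivity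
    rw [div_le_div_iff_of_pos_right hpos]
    exact_mod_cast h
  eq_of_dist_eq_zero := by
    intro x y hxy
    have hpos : (0 : ℝ) < (N : ℝ) + 1 := by positivity
    have : (nd (N + 1) x y : ℝ) = 0 := by
      field_simp at hxy
      exact_mod_cast hxy
    have h0 : nd (N + 1) x y = 0 := by exact_mod_cast this
    exact (nd_eq_zero_iff (by omega)).mp h0

instance (N : ℕ) : Countable (Sp N) := inferInstanceAs (Countable ℕ)

lemma sp_dist_eq (N : ℕ) (x y : Sp N) :
    dist x y = (nd (N + 1) x y : ℝ) / (N + 1) := rfl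

lemma sp_dist_mem (N : ℕ) (x y : Sp N) : dist x y ∈ distSetM (N + 1) := by
  refine ⟨nd (N + 1) x y, nd_le_N _ _ _, ?_⟩
  rw [sp_dist_eq]
  push_cast
  ring


/-! ### Universality -/

noncomputable def emb (N : ℕ) (dY : ℕ → ℕ → ℕ) (n : ℕ) : ℕ :=
  if h0 : ∃ i, ∃ _ : i < n, dY i n = 0 then emb N dY h0.choose
  else if hEP : ∃ u, ∀ i, i < n → nd N u (emb N dY i) = dY i n ∧ emb N dY i < u
    then hEP.choose else 0
  termination_by n
  decreasing_by
  all_goals first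
    | exact h0.choose_spec.choose
    | assumption

lemma emb_spec (N : ℕ) (hN : 1 ≤ N) (dY : ℕ → ℕ → ℕ)
    (hY0 : ∀ i, dY i i = 0) (hYs : ∀ i j, dY i j = dY j i)
    (hYt : ∀ i j k, dY i k ≤ dY i j + dY j k) (hYN : ∀ i j, dY i j ≤ N) :
    ∀ i j, nd N (emb N dY i) (emb N dY j) = dY i j := by
  classical
  suffices H : ∀ n i, i < n → nd N (emb N dY i) (emb N dY n) = dY i n by
    intro i j
    rcases lt_trichotomy i j with h | rfl | h
    · exact H j i h
    · rw [nd_self, hY0]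
    · rw [nd_comm, hYs i j]
      exact H i j h
  intro n
  induction n using Nat.strong_induction_on with
  | _ n IH =>
    -- full matrix below n
    have Mat : ∀ i j, i < n → j < n → nd N (emb N dY i) (emb N dY j) = dY i j := by
      intro i j hi hj
      rcases lt_trichotomy i j with h | rfl | h
      · exact IH j hj i h
      · rw [nd_self, hY0]
      · rw [nd_comm, hYs i j]
        exact IH i hi j h
    by_cases h0 : ∃ i, ∃ _ : i < n, dY i n = 0
    · -- the new point coincides with an old one
      set i₀ := h0.choose with hi₀
      have hi₀n : i₀ < n := h0.choose_spec.choose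
      have hdi₀ : dY i₀ n = 0 := h0.choose_spec.choose_spec
      have hemb : emb N dY n = emb N dY i₀ := by
        rw [emb]
        rw [dif_pos h0]
      intro i hi
      rw [hemb]
      have hd : dY i i₀ = dY i n := by
        have h1 := hYt i i₀ n
        have h2 := hYt i n i₀
        have h3 : dY n i₀ = dY i₀ n := hYs n i₀
        omega
      rw [Mat i i₀ hi hi₀n, hd]
    · -- genuinely new point: use the extension property
      have h0' : ∀ i, i < n → 1 ≤ dY i n := by
        intro i hi
        rcases Nat.eq_zero_or_pos (dY i n) with h | h
        · exact absurd ⟨i, hi, h⟩ h0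
        · exact h
      set F : Finset ℕ := (Finset.range n).image (emb N dY) with hF
      set ψ : ℕ → ℕ := fun x =>
        if hx : ∃ i, i < n ∧ emb N dY i = x then dY hx.choose n else 1 with hψ
      have hwd : ∀ i, i < n → ψ (emb N dY i) = dY i n := by
        intro i hi
        have hx : ∃ j, j < n ∧ emb N dY j = emb N dY i := ⟨i, hi, rfl⟩
        rw [hψ]
        simp only
        rw [dif_pos hx]
        set j := hx.choose with hj
        have hjn : j < n := hx.choose_spec.1
        have hje : emb N dY j = emb N dY i := hx.choose_spec.2
        have hji : dY j i = 0 := by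
          rw [← Mat j i hjn hi, hje, nd_self]
        have hA := hYt j i n
        have hB := hYt i j n
        have hC : dY i j = dY j i := hYs i j
        omega
      have hmem : ∀ x, x ∈ F ↔ ∃ i, i < n ∧ emb N dY i = x := by
        intro x
        simp [hF, Finset.mem_image, Finset.mem_range]
      have hEP : ∃ u, ∀ i, i < n → nd N u (emb N dY i) = dY i n ∧ emb N dY i < u := by
        have hcond1 : ∀ s ∈ F, 1 ≤ ψ s ∧ ψ s ≤ N := by
          intro s hs
          obtain ⟨i, hi, rfl⟩ := (hmem s).mp hs
          rw [hwd i hi]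
          exact ⟨h0' i hi, hYN i n⟩
        have hcond2 : ∀ s ∈ F, ∀ t ∈ F,
            ψ s ≤ ψ t + nd N t s ∧ nd N s t ≤ ψ s + ψ t := by
          intro s hs t ht
          obtain ⟨i, hi, rfl⟩ := (hmem s).mp hs
          obtain ⟨j, hj, rfl⟩ := (hmem t).mp ht
          rw [hwd i hi, hwd j hj, Mat j i hj hi, Mat i j hi hj]
          have h1 := hYt i j n
          have h2 := hYt i n j
          have h3 : dY i j = dY j i := hYs i j
          have h4 : dY n j = dY j n := hYs n j
          exact ⟨by omega, by omega⟩
        obtain ⟨u, hu1, hu2⟩ := exists_ext_finset N hN F ψ hcond1 hcond2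
        refine ⟨u, fun i hi => ?_⟩
        have hmemi : emb N dY i ∈ F := (hmem _).mpr ⟨i, hi, rfl⟩
        exact ⟨(hu2 _ hmemi).trans (hwd i hi), hu1 _ hmemi⟩
      have hemb : emb N dY n = hEP.choose := by
        rw [emb]
        rw [dif_neg h0, dif_pos hEP]
      intro i hi
      rw [hemb, nd_comm]
      exact (hEP.choose_spec i hi).1

theorem sp_universal (N : ℕ) (Y : Type) [MetricSpace Y] (hcount : Countable Y)
    (hY : ∀ a b : Y, dist a b ∈ distSetM (N + 1)) :
    ∃ f : Y → Sp N, Isometry f := by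
  classical
  rcases isEmpty_or_nonempty Y with hY0 | hY0
  · exact ⟨fun y => isEmptyElim y, fun y => isEmptyElim y⟩
  obtain ⟨g, hg⟩ := exists_surjective_nat Y
  choose dY hdY1 hdY0 using fun i j => hY (g i) (g j)
  have hdY2 : ∀ i j, dist (g i) (g j) = (dY i j : ℝ) / ((N : ℝ) + 1) := by
    intro i j
    rw [hdY0 i j]
    push_cast
    ring
  have hNpos : (0 : ℝ) < (N : ℝ) + 1 := by positivity
  have hcast : ∀ i j k l, dist (g i) (g j) = dist (g k) (g l) → dY i j = dY k l := by
    intro i j k l hd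
    rw [hdY2, hdY2] at hd
    field_simp at hd
    exact_mod_cast hd
  have hY0' : ∀ i, dY i i = 0 := by
    intro i
    have : dist (g i) (g i) = (0 : ℝ) := dist_self _
    rw [hdY2] at this
    have : (dY i i : ℝ) = 0 := by
      field_simp at this
      exact_mod_cast this
    exact_mod_cast this
  have hYs : ∀ i j, dY i j = dY j i := fun i j => hcast i j j i (dist_comm _ _)
  have hYt : ∀ i j k, dY i k ≤ dY i j + dY j k := by
    intro i j k
    have h := dist_triangle (g i) (g j) (g k)
    rw [hdY2, hdY2, hdY2, ← add_div, div_le_div_iff_of_pos_right hNpos] at h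
    exact_mod_cast h
  have hgd : ∀ i j, nd (N + 1) (emb (N + 1) dY i) (emb (N + 1) dY j) = dY i j :=
    emb_spec (N + 1) (by omega) dY hY0' hYs hYt hdY1
  set idx : Y → ℕ := fun y => (hg y).choose with hidx
  have hidx_spec : ∀ y, g (idx y) = y := fun y => (hg y).choose_spec
  refine ⟨fun y => emb (N + 1) dY (idx y), Isometry.of_dist_eq fun a b => ?_⟩
  show (nd (N + 1) (emb (N + 1) dY (idx a)) (emb (N + 1) dY (idx b)) : ℝ) / (N + 1) = dist a b
  rw [hgd, ← hdY2, hidx_spec, hidx_spec]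


/-! ### Ultrahomogeneity -/

def Good (N : ℕ) (P : Finset (ℕ × ℕ)) : Prop :=
  ∀ p ∈ P, ∀ q ∈ P, nd N p.1 q.1 = nd N p.2 q.2

lemma good_extendD (N : ℕ) (hN : 1 ≤ N) (P : Finset (ℕ × ℕ)) (hG : Good N P)
    (a : ℕ) : ∃ b, Good N (insert (a, b) P) := by
  classical
  by_cases h : ∃ p ∈ P, p.1 = a
  · obtain ⟨p, hp, hpa⟩ := h
    refine ⟨p.2, ?_⟩
    have : (a, p.2) = p := by rw [← hpa]
    rw [this, Finset.insert_eq_self.mpr hp]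
    exact hG
  · push_neg at h
    set F : Finset ℕ := P.image Prod.snd with hF
    set ψ : ℕ → ℕ := fun y =>
      if hy : ∃ p, p ∈ P ∧ p.2 = y then nd N a hy.choose.1 else 1 with hψ
    have hwd : ∀ p ∈ P, ψ p.2 = nd N a p.1 := by
      intro p hp
      have hy : ∃ q, q ∈ P ∧ q.2 = p.2 := ⟨p, hp, rfl⟩
      rw [hψ]
      simp only
      rw [dif_pos hy]
      set q := hy.choose with hq
      have hqP : q ∈ P := hy.choose_spec.1
      have hq2 : q.2 = p.2 := hy.choose_spec.2
      have : nd N q.1 p.1 = 0 := by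
        rw [hG q hqP p hp, hq2, nd_self]
      have hq1 : q.1 = p.1 := (nd_eq_zero_iff hN).mp this
      rw [hq1]
    have hmem : ∀ y, y ∈ F ↔ ∃ p ∈ P, p.2 = y := by
      intro y
      simp [hF, Finset.mem_image]
    have hcond1 : ∀ s ∈ F, 1 ≤ ψ s ∧ ψ s ≤ N := by
      intro s hs
      obtain ⟨p, hp, rfl⟩ := (hmem s).mp hs
      rw [hwd p hp]
      exact ⟨one_le_nd hN (fun hh => h p hp hh.symm), nd_le_N _ _ _⟩
    have hcond2 : ∀ s ∈ F, ∀ t ∈ F,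
        ψ s ≤ ψ t + nd N t s ∧ nd N s t ≤ ψ s + ψ t := by
      intro s hs t ht
      obtain ⟨p, hp, rfl⟩ := (hmem s).mp hs
      obtain ⟨q, hq, rfl⟩ := (hmem t).mp ht
      rw [hwd p hp, hwd q hq, ← hG q hq p hp, ← hG p hp q hq]
      have h1 := nd_triangle N a q.1 p.1
      have h2 := nd_triangle N p.1 a q.1
      have h3 := nd_comm N p.1 a
      omega
    obtain ⟨u, hu1, hu2⟩ := exists_ext_finset N hN F ψ hcond1 hcond2
    refine ⟨u, ?_⟩
    intro p hp q hq
    rcases Finset.mem_insert.mp hp with rfl | hp' <;>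
      rcases Finset.mem_insert.mp hq with rfl | hq'
    · simp [nd_self]
    · -- p = (a,u), q ∈ P
      have hm : q.2 ∈ F := (hmem _).mpr ⟨q, hq', rfl⟩
      have h' := (hu2 _ hm).trans (hwd q hq')
      exact h'.symm
    · have hm : p.2 ∈ F := (hmem _).mpr ⟨p, hp', rfl⟩
      have h' := (hu2 _ hm).trans (hwd p hp')
      rw [nd_comm N p.1 a, nd_comm N p.2 u]
      exact h'.symm
    · exact hG p hp' q hq'

lemma good_swap (N : ℕ) (P : Finset (ℕ × ℕ)) (hG : Good N P) :
    Good N (P.image Prod.swap) := by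
  intro p hp q hq
  obtain ⟨p', hp', rfl⟩ := Finset.mem_image.mp hp
  obtain ⟨q', hq', rfl⟩ := Finset.mem_image.mp hq
  exact (hG p' hp' q' hq').symm

lemma good_extendR (N : ℕ) (hN : 1 ≤ N) (P : Finset (ℕ × ℕ)) (hG : Good N P)
    (a : ℕ) : ∃ b, Good N (insert (b, a) P) := by
  classical
  obtain ⟨b, hb⟩ := good_extendD N hN (P.image Prod.swap) (good_swap N P hG) a
  refine ⟨b, ?_⟩
  have : insert (b, a) P = (insert (a, b) (P.image Prod.swap)).image Prod.swap := by
    rw [Finset.image_insert, Finset.image_image]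
    simp [Function.comp, Finset.image_id']
  rw [this]
  exact good_swap N _ hb

noncomputable def extD (N : ℕ) (P : Finset (ℕ × ℕ)) (a : ℕ) : Finset (ℕ × ℕ) :=
  if h : ∃ b, Good N (insert (a, b) P) then insert (a, h.choose) P else P

noncomputable def extR (N : ℕ) (P : Finset (ℕ × ℕ)) (a : ℕ) : Finset (ℕ × ℕ) :=
  if h : ∃ b, Good N (insert (b, a) P) then insert (h.choose, a) P else P

lemma extD_subset (N : ℕ) (P : Finset (ℕ × ℕ)) (a : ℕ) : P ⊆ extD N P a := by
  unfold extD; split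
  · exact Finset.subset_insert _ _
  · exact subset_rfl

lemma extR_subset (N : ℕ) (P : Finset (ℕ × ℕ)) (a : ℕ) : P ⊆ extR N P a := by
  unfold extR; split
  · exact Finset.subset_insert _ _
  · exact subset_rfl

lemma extD_good (N : ℕ) {P : Finset (ℕ × ℕ)} (hG : Good N P) (a : ℕ) :
    Good N (extD N P a) := by
  unfold extD; split
  · next h => exact h.choose_spec
  · exact hG

lemma extR_good (N : ℕ) {P : Finset (ℕ × ℕ)} (hG : Good N P) (a : ℕ) :
    Good N (extR N P a) := by
  unfold extR; split
  · next h => exact h.choose_spec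
  · exact hG

lemma extD_mem (N : ℕ) (hN : 1 ≤ N) {P : Finset (ℕ × ℕ)} (hG : Good N P) (a : ℕ) :
    ∃ b, (a, b) ∈ extD N P a := by
  have h := good_extendD N hN P hG a
  unfold extD
  rw [dif_pos h]
  exact ⟨h.choose, Finset.mem_insert_self _ _⟩

lemma extR_mem (N : ℕ) (hN : 1 ≤ N) {P : Finset (ℕ × ℕ)} (hG : Good N P) (a : ℕ) :
    ∃ b, (b, a) ∈ extR N P a := by
  have h := good_extendR N hN P hG a
  unfold extR
  rw [dif_pos h]
  exact ⟨h.choose, Finset.mem_insert_self _ _⟩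

noncomputable def chain (N : ℕ) (P0 : Finset (ℕ × ℕ)) : ℕ → Finset (ℕ × ℕ)
  | 0 => P0
  | n + 1 => extR N (extD N (chain N P0 n) n) n

lemma chain_good (N : ℕ) {P0 : Finset (ℕ × ℕ)} (hG : Good N P0) :
    ∀ n, Good N (chain N P0 n) := by
  intro n
  induction n with
  | zero => exact hG
  | succ n IH => exact extR_good N (extD_good N IH n) n

lemma chain_mono (N : ℕ) (P0 : Finset (ℕ × ℕ)) {k k' : ℕ} (h : k ≤ k') :
    chain N P0 k ⊆ chain N P0 k' := by
  induction k' with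
  | zero => rw [Nat.le_zero.mp h]
  | succ n IH =>
    rcases Nat.lt_or_ge k (n + 1) with h' | h'
    · refine (IH (by omega)).trans ?_
      rw [chain]
      exact (extD_subset N _ n).trans (extR_subset N _ n)
    · have : k = n + 1 := by omega
      rw [this]

lemma chain_coversD (N : ℕ) (hN : 1 ≤ N) {P0 : Finset (ℕ × ℕ)} (hG : Good N P0)
    (n : ℕ) : ∃ b, (n, b) ∈ chain N P0 (n + 1) := by
  rw [chain]
  obtain ⟨b, hb⟩ := extD_mem N hN (chain_good N hG n) n
  exact ⟨b, extR_subset N _ n hb⟩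

lemma chain_coversR (N : ℕ) (hN : 1 ≤ N) {P0 : Finset (ℕ × ℕ)} (hG : Good N P0)
    (n : ℕ) : ∃ a, (a, n) ∈ chain N P0 (n + 1) := by
  rw [chain]
  exact extR_mem N hN (extD_good N (chain_good N hG n) n) n

lemma chain_unique (N : ℕ) (hN : 1 ≤ N) {P0 : Finset (ℕ × ℕ)} (hG : Good N P0)
    {a b b' k k'} (h1 : (a, b) ∈ chain N P0 k) (h2 : (a, b') ∈ chain N P0 k') :
    b = b' := by
  have hm1 : (a, b) ∈ chain N P0 (max k k') := chain_mono N P0 (le_max_left _ _) h1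
  have hm2 : (a, b') ∈ chain N P0 (max k k') := chain_mono N P0 (le_max_right _ _) h2
  have := chain_good N hG (max k k') _ hm1 _ hm2
  simp only [nd_self] at this
  exact (nd_eq_zero_iff hN).mp this.symm

lemma chain_unique' (N : ℕ) (hN : 1 ≤ N) {P0 : Finset (ℕ × ℕ)} (hG : Good N P0)
    {a a' b k k'} (h1 : (a, b) ∈ chain N P0 k) (h2 : (a', b) ∈ chain N P0 k') :
    a = a' := by
  have hm1 : (a, b) ∈ chain N P0 (max k k') := chain_mono N P0 (le_max_left _ _) h1
  have hm2 : (a', b) ∈ chain N P0 (max k k') := chain_mono N P0 (le_max_right _ _) h2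
  have := chain_good N hG (max k k') _ hm1 _ hm2
  simp only [nd_self] at this
  exact (nd_eq_zero_iff hN).mp this

def toNat {N : ℕ} (a : Sp N) : ℕ := a

theorem sp_ultrahomogeneous (N : ℕ) : IsUltrahomogeneous (Sp N) := by
  intro F hFfin φ hφ
  haveI := hFfin.fintype
  have hN1 : 1 ≤ N + 1 := by omega
  have hnd_of_dist : ∀ x y x' y' : Sp N, dist x y = dist x' y' →
      nd (N + 1) x y = nd (N + 1) x' y' := by
    intro x y x' y' hxy
    rw [sp_dist_eq, sp_dist_eq] at hxy
    field_simp at hxy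
    exact_mod_cast hxy
  have hrange : (Set.range (fun p : F => ((toNat p.1, toNat (φ p)) : ℕ × ℕ))).Finite :=
    Set.finite_range _
  set P0 : Finset (ℕ × ℕ) := hrange.toFinset with hP0
  have hmem1 : ∀ (x : F), (toNat x.1, toNat (φ x)) ∈ P0 := by
    intro x
    rw [hP0, Set.Finite.mem_toFinset]
    exact ⟨x, rfl⟩
  have hgood0 : Good (N + 1) P0 := by
    intro p hp q hq
    rw [hP0, Set.Finite.mem_toFinset] at hp hq
    obtain ⟨x, rfl⟩ := hp
    obtain ⟨y, rfl⟩ := hq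
    apply hnd_of_dist
    have h1 := hφ.dist_eq x y
    rw [Subtype.dist_eq] at h1
    exact h1.symm
  have hcovD := fun n => chain_coversD (N + 1) hN1 hgood0 n
  have hcovR := fun n => chain_coversR (N + 1) hN1 hgood0 n
  set Ψ : Sp N → Sp N := fun a => (hcovD (toNat a)).choose with hΨ
  have hΨspec : ∀ a : Sp N, (toNat a, toNat (Ψ a)) ∈ chain (N + 1) P0 (toNat a + 1) :=
    fun a => (hcovD (toNat a)).choose_spec
  have hiso_nd : ∀ a c : Sp N, nd (N + 1) (Ψ a) (Ψ c) = nd (N + 1) a c := by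
    intro a c
    have h1 : (toNat a, toNat (Ψ a)) ∈ chain (N + 1) P0 (max (toNat a + 1) (toNat c + 1)) :=
      chain_mono _ _ (le_max_left _ _) (hΨspec a)
    have h2 : (toNat c, toNat (Ψ c)) ∈ chain (N + 1) P0 (max (toNat a + 1) (toNat c + 1)) :=
      chain_mono _ _ (le_max_right _ _) (hΨspec c)
    exact (chain_good (N + 1) hgood0 _ _ h1 _ h2).symm
  have hiso : Isometry Ψ := by
    apply Isometry.of_dist_eq
    intro a b
    show (nd (N + 1) (Ψ a) (Ψ b) : ℝ) / (N + 1) = (nd (N + 1) a b : ℝ) / (N + 1)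
    rw [hiso_nd]
  have hsurj : Function.Surjective Ψ := by
    intro b
    obtain ⟨a, ha⟩ := hcovR (toNat b)
    exact ⟨a, chain_unique (N + 1) hN1 hgood0 (hΨspec a) ha⟩
  refine ⟨⟨Equiv.ofBijective Ψ ⟨hiso.injective, hsurj⟩, hiso⟩, ?_⟩
  intro x
  show Ψ (x : Sp N) = φ x
  have h2 : (toNat (x : Sp N), toNat (φ x)) ∈ chain (N + 1) P0 0 := hmem1 x
  exact chain_unique (N + 1) hN1 hgood0 (hΨspec (x : Sp N))
    (chain_mono (N + 1) P0 (k := 0) (k' := 0) le_rfl h2)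

theorem sp_isUrysohnSphereM (N : ℕ) : IsUrysohnSphereM (N + 1) (Sp N) :=
  ⟨inferInstance, sp_ultrahomogeneous N, sp_dist_mem N,
    fun Y _ hc hY => sp_universal N Y hc hY⟩


instance (N : ℕ) : Infinite (Sp N) := inferInstanceAs (Infinite ℕ)

/-! ### The rounding map σ -/

/-- round `p/M` (`M = 2m(m+1)`) to a multiple `2(m+1)k/M = k/m` -/
def sig (m p : ℕ) : ℕ := 2 * (m + 1) * min m ((p + 2 * m + 2) / (2 * m + 3))

lemma sig_zero (m : ℕ) : sig m 0 = 0 := by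
  unfold sig
  rw [Nat.div_eq_of_lt (by omega)]
  simp

lemma sig_le (m p : ℕ) : sig m p ≤ 2 * (m + 1) * m :=
  Nat.mul_le_mul_left _ (min_le_left _ _)

lemma sig_pos (m p : ℕ) (hm : 1 ≤ m) (hp : 1 ≤ p) : 1 ≤ sig m p := by
  unfold sig
  have h1 : 1 ≤ (p + 2 * m + 2) / (2 * m + 3) :=
    (Nat.one_le_div_iff (by omega)).mpr (by omega)
  have : 1 ≤ min m ((p + 2 * m + 2) / (2 * m + 3)) := le_min hm h1
  calc 1 ≤ 1 * 1 := by omega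
  _ ≤ 2 * (m + 1) * min m ((p + 2 * m + 2) / (2 * m + 3)) :=
      Nat.mul_le_mul (by omega) this

lemma sig_subadd (m : ℕ) {r p q : ℕ} (h : r ≤ p + q) :
    sig m r ≤ sig m p + sig m q := by
  unfold sig
  rw [← Nat.mul_add]
  apply Nat.mul_le_mul_left
  set g := 2 * m + 3 with hg
  have hgpos : 0 < g := by omega
  set a := (p + 2 * m + 2) / g with ha
  set b := (q + 2 * m + 2) / g with hb
  rcases le_or_gt m a with hma | hma
  · calc min m ((r + 2 * m + 2) / g) ≤ m := min_le_left _ _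
    _ = min m a := (min_eq_left hma).symm
    _ ≤ min m a + min m b := Nat.le_add_right _ _
  rcases le_or_gt m b with hmb | hmb
  · calc min m ((r + 2 * m + 2) / g) ≤ m := min_le_left _ _
    _ = min m b := (min_eq_left hmb).symm
    _ ≤ min m a + min m b := Nat.le_add_left _ _
  rw [min_eq_right hma.le, min_eq_right hmb.le]
  refine le_trans (min_le_right _ _) ?_
  rw [Nat.div_le_iff_le_mul_add_pred hgpos, Nat.mul_add]
  have hp' : p ≤ g * a := by
    have h2 : p + 2 * m + 2 < (a + 1) * g :=
      (Nat.div_lt_iff_lt_mul hgpos).mp (by omega)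
    have h3 : (a + 1) * g = g * a + g := by ring
    omega
  have hq' : q ≤ g * b := by
    have h2 : q + 2 * m + 2 < (b + 1) * g :=
      (Nat.div_lt_iff_lt_mul hgpos).mp (by omega)
    have h3 : (b + 1) * g = g * b + g := by ring
    omega
  omega

lemma sig_window (m k p : ℕ) (hm : 2 ≤ m) (hk1 : 1 ≤ k) (hkm : k ≤ m)
    (h1 : k * (2 * m + 1) ≤ p + 2) (h2 : p ≤ k * (2 * m + 1) + 2) :
    sig m p = 2 * (m + 1) * k := by
  obtain ⟨k', rfl⟩ : ∃ k', k = k' + 1 := ⟨k - 1, by omega⟩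
  unfold sig
  set g := 2 * m + 3 with hg
  have hgpos : 0 < g := by omega
  have hcd : (p + 2 * m + 2) / g = k' + 1 := by
    have e1 : (k' + 1) * (2 * m + 1) = k' * (2 * m + 1) + 2 * m + 1 := by ring
    have e2 : k' * g = k' * (2 * m + 1) + 2 * k' := by rw [hg]; ring
    have e3 : (k' + 1) * g = k' * (2 * m + 1) + 2 * k' + g := by rw [hg]; ring
    have hk'm : k' + 1 ≤ m := hkm
    refine le_antisymm ?_ ?_
    · rw [Nat.div_le_iff_le_mul_add_pred hgpos]
      have : g * (k' + 1) = (k' + 1) * g := by ring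
      omega
    · rw [Nat.le_div_iff_mul_le hgpos]
      omega
  rw [hcd, min_eq_right hkm]

/-! ### type synonym with modified metric -/

def Copy (X : Type) : Type := X
def toCopy {X : Type} (x : X) : Copy X := x
def unCopy {X : Type} (x : Copy X) : X := x

end Stmt9Aux

open Stmt9Aux in
/-- If `S_{2(m²+m)}` is `1/(2(m²+m))`-indivisible, then `S_m` is indivisible. -/
theorem stmt9 (m : ℕ) (hm : 0 < m)
    (h : ∀ (T : Type) [MetricSpace T], IsUrysohnSphereM (2 * (m^2 + m)) T →
      EpsIndivisible T (1 / (2 * ((m : ℝ)^2 + m))))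
    (Sm : Type) [MetricSpace Sm] (hSm : IsUrysohnSphereM m Sm) :
    EpsIndivisible Sm 0 := by
  classical
  obtain ⟨hSmCount, hSmHom, hSmDist, hSmUniv⟩ := hSm
  haveI := hSmCount
  intro k hk χ
  choose dm hdm_le hdm_eq using hSmDist
  have hmR : (0:ℝ) < (m:ℝ) := by exact_mod_cast hm
  have hmne : (m:ℝ) ≠ 0 := ne_of_gt hmR
  have hdm_zero : ∀ x y : Sm, dm x y = 0 ↔ x = y := by
    intro x y
    constructor
    · intro h0
      apply eq_of_dist_eq_zero
      rw [hdm_eq x y, h0]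
      simp
    · rintro rfl
      have h1 : (dm x x : ℝ) / m = 0 := by rw [← hdm_eq, dist_self]
      have h2 : (dm x x : ℝ) = 0 := by
        rcases div_eq_zero_iff.mp h1 with h' | h'
        · exact h'
        · exact absurd h' hmne
      exact_mod_cast h2
  rcases Nat.lt_or_ge m 2 with hm2 | hm2
  · -- m = 1
    have hm1 : m = 1 := by omega
    subst hm1
    have hdm1 : ∀ x y : Sm, x ≠ y → dist x y = 1 := by
      intro x y hxy
      have h1 : dm x y ≤ 1 := hdm_le x y
      have h2 : dm x y ≠ 0 := fun h0 => hxy ((hdm_zero x y).mp h0)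
      have h3 : dm x y = 1 := by omega
      rw [hdm_eq, h3]
      norm_num
    obtain ⟨f0, hf0⟩ := hSmUniv (Sp 0) inferInstance (fun a b => sp_dist_mem 0 a b)
    haveI : Infinite Sm := Infinite.of_injective f0 hf0.injective
    obtain ⟨i, hinf⟩ := Finite.exists_infinite_fiber χ
    haveI : Infinite (χ ⁻¹' {i}) := hinf
    obtain ⟨dSm⟩ := nonempty_denumerable Sm
    obtain ⟨dF⟩ := nonempty_denumerable (χ ⁻¹' {i})
    letI := dSm
    letI := dF
    set e : Sm ≃ (χ ⁻¹' {i}) :=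
      (Denumerable.eqv Sm).trans (Denumerable.eqv (χ ⁻¹' {i})).symm with hedef
    refine ⟨i, fun z => ((e z : χ ⁻¹' {i}) : Sm), ?_, fun z => ⟨((e z : χ ⁻¹' {i}) : Sm), ?_, ?_⟩⟩
    · apply Isometry.of_dist_eq
      intro a b
      rcases eq_or_ne a b with rfl | hab
      · simp
      · have h1 : ((e a : χ ⁻¹' {i}) : Sm) ≠ ((e b : χ ⁻¹' {i}) : Sm) := by
          intro hc
          exact hab (e.injective (Subtype.ext hc))
        rw [hdm1 _ _ h1, hdm1 a b hab]
    · exact Set.mem_singleton_iff.mp (Set.mem_preimage.mp (e z).2)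
    · exact le_of_eq (dist_self _)
  · -- m ≥ 2
    set M := 2 * (m ^ 2 + m) with hMdef
    have hMM : M = 2 * m * (m + 1) := by rw [hMdef]; ring
    have hMpos : 1 ≤ M := by
      have h1 : 0 < 2 * m := by omega
      have h2 : 0 < m + 1 := by omega
      have := Nat.mul_pos h1 h2
      omega
    have hN0 : M - 1 + 1 = M := by omega
    have hury : IsUrysohnSphereM M (Sp (M-1)) := by
      have := sp_isUrysohnSphereM (M - 1)
      rwa [hN0] at this
    have hind := h (Sp (M-1)) hury
    have hMcast : ((M : ℕ) : ℝ) = 2 * ((m:ℝ)^2 + m) := by rw [hMdef]; push_cast; ring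
    have hMRpos : (0:ℝ) < (M:ℝ) := by
      rw [hMcast]; positivity
    have hMne : (M:ℝ) ≠ 0 := ne_of_gt hMRpos
    have hdistT : ∀ x y : Sp (M-1), dist x y = (nd M x y : ℝ) / M := by
      intro x y
      have h1 := sp_dist_eq (M-1) x y
      rw [hN0] at h1
      have h2 : ((M-1 : ℕ) : ℝ) + 1 = (M:ℝ) := by
        rw [Nat.cast_sub hMpos]
        push_cast
        ring
      rw [h2] at h1
      exact h1
    -- the scaled copy of Sm
    letI instSc : MetricSpace (Copy Sm) :=
      { dist := fun x y => ((m:ℝ) * (2*(m:ℝ)+1) / (M:ℝ)) * dist (unCopy x) (unCopy y)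
        dist_self := fun x => by
          show ((m:ℝ) * (2*(m:ℝ)+1) / (M:ℝ)) * dist (unCopy x) (unCopy x) = 0
          rw [dist_self, mul_zero]
        dist_comm := fun x y => by
          show ((m:ℝ) * (2*(m:ℝ)+1) / (M:ℝ)) * dist (unCopy x) (unCopy y)
            = ((m:ℝ) * (2*(m:ℝ)+1) / (M:ℝ)) * dist (unCopy y) (unCopy x)
          rw [dist_comm]
        dist_triangle := fun x y z => by
          show ((m:ℝ) * (2*(m:ℝ)+1) / (M:ℝ)) * dist (unCopy x) (unCopy z)
            ≤ ((m:ℝ) * (2*(m:ℝ)+1) / (M:ℝ)) * dist (unCopy x) (unCopy y)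
            + ((m:ℝ) * (2*(m:ℝ)+1) / (M:ℝ)) * dist (unCopy y) (unCopy z)
          have htri := dist_triangle (unCopy x) (unCopy y) (unCopy z)
          have hcpos : (0:ℝ) ≤ (m:ℝ) * (2*(m:ℝ)+1) / (M:ℝ) := by positivity
          rw [← mul_add]
          exact mul_le_mul_of_nonneg_left htri hcpos
        eq_of_dist_eq_zero := by
          intro x y hxy
          have hxy' : ((m:ℝ) * (2*(m:ℝ)+1) / (M:ℝ)) * dist (unCopy x) (unCopy y) = 0 := hxy
          have hcpos : (0:ℝ) < (m:ℝ) * (2*(m:ℝ)+1) / (M:ℝ) := by positivity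
          rcases mul_eq_zero.mp hxy' with h' | h'
          · exact absurd h' (ne_of_gt hcpos)
          · exact @eq_of_dist_eq_zero Sm _ (unCopy x) (unCopy y) h' }
    haveI : Countable (Copy Sm) := inferInstanceAs (Countable Sm)
    have hScDist : ∀ x y : Copy Sm, dist x y ∈ distSetM M := by
      intro x y
      refine ⟨dm (unCopy x) (unCopy y) * (2*m+1), ?_, ?_⟩
      · have h1 := hdm_le (unCopy x) (unCopy y)
        have h2 : dm (unCopy x) (unCopy y) * (2*m+1) ≤ m * (2*m+1) :=
          Nat.mul_le_mul_right _ h1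
        have h3 : m * (2*m+1) + m = M := by rw [hMdef]; ring
        omega
      · show ((m:ℝ) * (2*(m:ℝ)+1) / (M:ℝ)) * dist (unCopy x) (unCopy y)
          = ((dm (unCopy x) (unCopy y) * (2*m+1) : ℕ) : ℝ) / M
        rw [hdm_eq]
        push_cast
        field_simp
    obtain ⟨f, hf⟩ := hury.2.2.2 (Copy Sm) inferInstance hScDist
    -- the shrunk copy of T mapped into Sm
    letI instSh : MetricSpace (Copy (Sp (M-1))) :=
      { dist := fun s t => (sig m (nd M (unCopy s) (unCopy t)) : ℝ) / M
        dist_self := fun s => by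
          show (sig m (nd M (unCopy s) (unCopy s)) : ℝ) / M = 0
          rw [nd_self, sig_zero]
          simp
        dist_comm := fun s t => by
          show (sig m (nd M (unCopy s) (unCopy t)) : ℝ) / M
            = (sig m (nd M (unCopy t) (unCopy s)) : ℝ) / M
          rw [nd_comm]
        dist_triangle := fun s t u => by
          show (sig m (nd M (unCopy s) (unCopy u)) : ℝ) / M
            ≤ (sig m (nd M (unCopy s) (unCopy t)) : ℝ) / M
            + (sig m (nd M (unCopy t) (unCopy u)) : ℝ) / M
          have h1 : sig m (nd M (unCopy s) (unCopy u)) ≤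
              sig m (nd M (unCopy s) (unCopy t)) + sig m (nd M (unCopy t) (unCopy u)) :=
            sig_subadd m (nd_triangle M _ _ _)
          rw [← add_div, div_le_div_iff_of_pos_right hMRpos]
          exact_mod_cast h1
        eq_of_dist_eq_zero := by
          intro s t hst
          have hst' : (sig m (nd M (unCopy s) (unCopy t)) : ℝ) / M = 0 := hst
          have h1 : (sig m (nd M (unCopy s) (unCopy t)) : ℝ) = 0 := by
            rcases div_eq_zero_iff.mp hst' with h' | h'
            · exact h'
            · exact absurd h' hMne
          have h2 : sig m (nd M (unCopy s) (unCopy t)) = 0 := by exact_mod_cast h1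
          have h3 : nd M (unCopy s) (unCopy t) = 0 := by
            by_contra h4
            have := sig_pos m (nd M (unCopy s) (unCopy t)) (by omega) (by omega)
            omega
          exact (nd_eq_zero_iff (by omega : 1 ≤ M)).mp h3 }
    haveI : Countable (Copy (Sp (M-1))) := inferInstanceAs (Countable ℕ)
    have hShDist : ∀ s t : Copy (Sp (M-1)), dist s t ∈ distSetM m := by
      intro s t
      refine ⟨min m ((nd M (unCopy s) (unCopy t) + 2*m+2)/(2*m+3)), min_le_left _ _, ?_⟩
      show (sig m (nd M (unCopy s) (unCopy t)) : ℝ) / M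
        = ((min m ((nd M (unCopy s) (unCopy t) + 2*m+2)/(2*m+3)) : ℕ) : ℝ) / m
      have h1 : sig m (nd M (unCopy s) (unCopy t)) =
          2 * (m+1) * min m ((nd M (unCopy s) (unCopy t) + 2*m+2)/(2*m+3)) := rfl
      rw [h1]
      push_cast
      rw [hMcast]
      field_simp
    obtain ⟨φm, hφm⟩ := hSmUniv (Copy (Sp (M-1))) inferInstance hShDist
    set χ' : Sp (M-1) → Fin k := fun t => χ (φm (toCopy t)) with hχ'
    obtain ⟨i, e, he_iso, he⟩ := hind k hk χ'
    choose tz htz1 htz2 using fun z : Sm => he (f (toCopy z))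
    set e' : Sm → Sm := fun z => φm (toCopy (tz z)) with he'
    have hcol : ∀ z, χ (e' z) = i := fun z => htz1 z
    have hεeq : (1:ℝ)/(2*((m:ℝ)^2+m)) = 1/(M:ℝ) := by rw [hMcast]
    have hiso' : Isometry e' := by
      apply Isometry.of_dist_eq
      intro z w
      rcases eq_or_ne z w with rfl | hzw
      · rw [dist_self, dist_self]
      set k' := dm z w with hk'
      have hk'1 : 1 ≤ k' := by
        rcases Nat.eq_zero_or_pos k' with h0 | h'
        · exact absurd ((hdm_zero z w).mp h0) hzw
        · exact h'
      have hk'm : k' ≤ m := hdm_le z w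
      have hTzw : dist (f (toCopy z)) (f (toCopy w)) = ((k' * (2*m+1) : ℕ) : ℝ)/M := by
        rw [hf.dist_eq]
        show ((m:ℝ) * (2*(m:ℝ)+1) / (M:ℝ)) * dist z w = ((k' * (2*m+1) : ℕ) : ℝ)/M
        rw [hdm_eq z w, ← hk']
        push_cast
        field_simp
      have heq : dist (e (f (toCopy z))) (e (f (toCopy w))) = ((k'*(2*m+1):ℕ):ℝ)/M := by
        rw [he_iso.dist_eq, hTzw]
      have hb1 := htz2 z
      have hb2 := htz2 w
      rw [hεeq] at hb1 hb2
      set p := nd M (tz z) (tz w) with hp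
      have hptz : dist (tz z) (tz w) = (p:ℝ)/M := hdistT _ _
      have htri1 : dist (tz z) (tz w) ≤ ((k'*(2*m+1):ℕ):ℝ)/M + 2/M := by
        calc dist (tz z) (tz w)
            ≤ dist (tz z) (e (f (toCopy z))) + dist (e (f (toCopy z))) (e (f (toCopy w)))
              + dist (e (f (toCopy w))) (tz w) := dist_triangle4 _ _ _ _
        _ ≤ 1/M + ((k'*(2*m+1):ℕ):ℝ)/M + 1/M := by
            refine add_le_add (add_le_add ?_ (le_of_eq heq)) hb2
            rw [dist_comm]; exact hb1
        _ = ((k'*(2*m+1):ℕ):ℝ)/M + 2/M := by ring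
      have htri2 : ((k'*(2*m+1):ℕ):ℝ)/M ≤ dist (tz z) (tz w) + 2/M := by
        calc ((k'*(2*m+1):ℕ):ℝ)/M = dist (e (f (toCopy z))) (e (f (toCopy w))) := heq.symm
        _ ≤ dist (e (f (toCopy z))) (tz z) + dist (tz z) (tz w)
            + dist (tz w) (e (f (toCopy w))) := dist_triangle4 _ _ _ _
        _ ≤ 1/M + dist (tz z) (tz w) + 1/M := by
            refine add_le_add (add_le_add hb1 le_rfl) ?_
            rw [dist_comm]; exact hb2
        _ = dist (tz z) (tz w) + 2/M := by ring
      have hn1 : k' * (2*m+1) ≤ p + 2 := by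
        rw [hptz] at htri2
        rw [← add_div] at htri2
        rw [div_le_div_iff_of_pos_right hMRpos] at htri2
        exact_mod_cast htri2
      have hn2 : p ≤ k' * (2*m+1) + 2 := by
        rw [hptz, ← add_div, div_le_div_iff_of_pos_right hMRpos] at htri1
        exact_mod_cast htri1
      have hsig := sig_window m k' p hm2 hk'1 hk'm hn1 hn2
      have hL : dist (e' z) (e' w) = ((sig m p : ℕ) : ℝ)/M := by
        show dist (φm (toCopy (tz z))) (φm (toCopy (tz w))) = _
        rw [hφm.dist_eq]
        rfl
      rw [hL, hsig, hdm_eq z w, ← hk']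
      push_cast
      rw [hMcast]
      field_simp
    exact ⟨i, e', hiso', fun z => ⟨e' z, hcol z, le_of_eq (dist_self _)⟩⟩
end

section
/- A countable metric space X is ultrahomogeneous if and only if for every finite subspace F ⊆ X and every Katětov map f over F such that the one-point extension F ∪ {f} embeds isometrically into X (i.e., there exist an isometric embedding φ of F into X and a point z ∈ X with d(φ(x), z) = f(x) for all x ∈ F), there exists y ∈ X with d(x, y) = f(x) for every x ∈ F. -/
open Metric

section aux12

variable {X : Type} [MetricSpace X]

private def KatProp (X : Type) [MetricSpace X] : Prop :=
  ∀ F : Set X, F.Finite → ∀ f : X → ℝ,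
    (∀ x ∈ F, 0 < f x) →
    (∀ x ∈ F, ∀ x' ∈ F, |f x - f x'| ≤ dist x x' ∧ dist x x' ≤ f x + f x') →
    (∃ (φ : F → X) (z : X), Isometry φ ∧ ∀ x : F, dist (φ x) z = f x) →
    ∃ y : X, ∀ x ∈ F, dist x y = f x

private lemma isomOn_injOn (A : Set X) (g : X → X)
    (hg : ∀ a ∈ A, ∀ a' ∈ A, dist (g a) (g a') = dist a a') : Set.InjOn g A := by
  intro a ha a' ha' h
  have h2 := hg a ha a' ha'
  rw [h, dist_self] at h2
  exact dist_eq_zero.mp h2.symm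

private lemma realize_aux (hyp : KatProp X) (A : Set X) (hA : A.Finite) (g : X → X)
    (hg : ∀ a ∈ A, ∀ a' ∈ A, dist (g a) (g a') = dist a a') (b : X) (hb : b ∉ A) :
    ∃ y, ∀ a ∈ A, dist (g a) y = dist a b := by
  haveI : Nonempty X := ⟨b⟩
  set h := Function.invFunOn g A with hh
  have key : ∀ a ∈ A, h (g a) = a := fun a ha =>
    (isomOn_injOn A g hg).leftInvOn_invFunOn ha
  obtain ⟨y, hy⟩ := hyp (g '' A) (hA.image g) (fun x => dist (h x) b)
    (by rintro x ⟨a, ha, rfl⟩; simp only [key a ha]; exact dist_pos.mpr (fun e => hb (e ▸ ha)))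
    (by
      rintro x ⟨a, ha, rfl⟩ x' ⟨a', ha', rfl⟩
      simp only [key a ha, key a' ha']
      constructor
      · have h3 := abs_dist_sub_le a a' b
        rwa [← hg a ha a' ha'] at h3
      · rw [hg a ha a' ha']
        exact (dist_triangle a b a').trans (by rw [dist_comm b a'])
    )
    ⟨fun x => h x.1, b, Isometry.of_dist_eq (by
        rintro ⟨x, a, ha, rfl⟩ ⟨x', a', ha', rfl⟩
        rw [Subtype.dist_eq]
        simp only [key a ha, key a' ha']
        exact (hg a ha a' ha').symm), fun x => rfl⟩
  exact ⟨y, fun a ha => by simpa [key a ha] using hy (g a) ⟨a, ha, rfl⟩⟩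

private lemma forth_aux (hyp : KatProp X) (A : Set X) (hA : A.Finite) (g : X → X)
    (hg : ∀ a ∈ A, ∀ a' ∈ A, dist (g a) (g a') = dist a a') (b : X) :
    ∃ g' : X → X, (∀ a ∈ A, g' a = g a) ∧
      ∀ a ∈ insert b A, ∀ a' ∈ insert b A, dist (g' a) (g' a') = dist a a' := by
  by_cases hb : b ∈ A
  · exact ⟨g, fun a _ => rfl, by rw [Set.insert_eq_self.mpr hb]; exact hg⟩
  obtain ⟨y, hy⟩ := realize_aux hyp A hA g hg b hb
  classical
  have hupd : ∀ a ∈ A, Function.update g b y a = g a := fun a ha =>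
    Function.update_of_ne (ne_of_mem_of_not_mem ha hb) _ _
  refine ⟨Function.update g b y, hupd, ?_⟩
  rintro a (rfl | ha) a' (rfl | ha')
  · simp
  · rw [Function.update_self, hupd a' ha', dist_comm y (g a'), hy a' ha']; exact dist_comm _ _
  · rw [Function.update_self, hupd a ha]; exact hy a ha
  · rw [hupd a ha, hupd a' ha']; exact hg a ha a' ha'

private lemma back_aux (hyp : KatProp X) (A : Set X) (hA : A.Finite) (g : X → X)
    (hg : ∀ a ∈ A, ∀ a' ∈ A, dist (g a) (g a') = dist a a') (c : X) :
    ∃ (A' : Set X) (g' : X → X), A'.Finite ∧ A ⊆ A' ∧ (∀ a ∈ A, g' a = g a) ∧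
      (∀ a ∈ A', ∀ a' ∈ A', dist (g' a) (g' a') = dist a a') ∧ c ∈ g' '' A' := by
  by_cases hc : c ∈ g '' A
  · exact ⟨A, g, hA, subset_rfl, fun _ _ => rfl, hg, hc⟩
  obtain ⟨y, hy⟩ := hyp A hA (fun a => dist (g a) c)
    (fun a ha => dist_pos.mpr fun e => hc ⟨a, ha, e⟩)
    (fun a ha a' ha' => by
      constructor
      · have h3 := abs_dist_sub_le (g a) (g a') c
        rwa [hg a ha a' ha'] at h3
      · rw [← hg a ha a' ha']
        exact (dist_triangle (g a) c (g a')).trans (by rw [dist_comm c (g a')])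
    )
    ⟨fun a => g a.1, c, Isometry.of_dist_eq (by
        rintro ⟨a, ha⟩ ⟨a', ha'⟩
        rw [Subtype.dist_eq]
        exact hg a ha a' ha'), fun a => rfl⟩
  classical
  have hyA : y ∉ A := by
    intro hyA
    refine hc ⟨y, hyA, ?_⟩
    have h4 := hy y hyA
    rw [dist_self] at h4
    exact (dist_eq_zero.mp h4.symm)
  have hupd : ∀ a ∈ A, Function.update g y c a = g a := fun a ha =>
    Function.update_of_ne (ne_of_mem_of_not_mem ha hyA) _ _
  refine ⟨insert y A, Function.update g y c, hA.insert y, Set.subset_insert _ _, hupd, ?_,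
    ⟨y, Set.mem_insert _ _, Function.update_self _ _ _⟩⟩
  rintro a (rfl | ha) a' (rfl | ha')
  · simp
  · rw [Function.update_self, hupd a' ha', dist_comm c (g a'), ← hy a' ha']; exact dist_comm _ _
  · rw [Function.update_self, hupd a ha]; exact (hy a ha).symm
  · rw [hupd a ha, hupd a' ha']; exact hg a ha a' ha'

private lemma step_aux (hyp : KatProp X) (A : Set X) (hA : A.Finite) (g : X → X)
    (hg : ∀ a ∈ A, ∀ a' ∈ A, dist (g a) (g a') = dist a a') (b : X) :
    ∃ (A' : Set X) (g' : X → X), A'.Finite ∧ A ⊆ A' ∧ (∀ a ∈ A, g' a = g a) ∧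
      (∀ a ∈ A', ∀ a' ∈ A', dist (g' a) (g' a') = dist a a') ∧ b ∈ A' ∧ b ∈ g' '' A' := by
  obtain ⟨A₁, g₁, hA₁, hsub₁, hagree₁, hg₁, hb₁⟩ := back_aux hyp A hA g hg b
  obtain ⟨g₂, hagree₂, hg₂⟩ := forth_aux hyp A₁ hA₁ g₁ hg₁ b
  refine ⟨insert b A₁, g₂, hA₁.insert b, (hsub₁.trans (Set.subset_insert _ _)),
    fun a ha => (hagree₂ a (hsub₁ ha)).trans (hagree₁ a ha), hg₂,
    Set.mem_insert _ _, ?_⟩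
  obtain ⟨a, ha, rfl⟩ := hb₁
  exact ⟨a, Set.mem_insert_of_mem _ ha, hagree₂ a ha⟩

private lemma backforth (hyp : KatProp X) [Countable X] [Nonempty X]
    (F : Set X) (hF : F.Finite) (g₀ : X → X)
    (hg₀ : ∀ a ∈ F, ∀ a' ∈ F, dist (g₀ a) (g₀ a') = dist a a') :
    ∃ ψ : X ≃ᵢ X, ∀ a ∈ F, ψ a = g₀ a := by
  obtain ⟨e, he⟩ := exists_surjective_nat X
  let Sub := {p : Set X × (X → X) //
    p.1.Finite ∧ ∀ a ∈ p.1, ∀ a' ∈ p.1, dist (p.2 a) (p.2 a') = dist a a'}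
  have step : ∀ (p : Sub) (b : X), ∃ q : Sub, p.1.1 ⊆ q.1.1 ∧
      (∀ a ∈ p.1.1, q.1.2 a = p.1.2 a) ∧ b ∈ q.1.1 ∧ b ∈ q.1.2 '' q.1.1 := by
    rintro ⟨⟨A, g⟩, hA, hg⟩ b
    obtain ⟨A', g', h1, h2, h3, h4, h5, h6⟩ := step_aux hyp A hA g hg b
    exact ⟨⟨(A', g'), h1, h4⟩, h2, h3, h5, h6⟩
  obtain ⟨seq, hseq0, hseqS⟩ : ∃ seq : ℕ → Sub, seq 0 = ⟨(F, g₀), hF, hg₀⟩ ∧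
      ∀ n, (seq n).1.1 ⊆ (seq (n+1)).1.1 ∧
        (∀ a ∈ (seq n).1.1, (seq (n+1)).1.2 a = (seq n).1.2 a) ∧
        e n ∈ (seq (n+1)).1.1 ∧ e n ∈ (seq (n+1)).1.2 '' (seq (n+1)).1.1 := by
    refine ⟨fun n => Nat.rec ⟨(F, g₀), hF, hg₀⟩ (fun n p => (step p (e n)).choose) n,
      rfl, fun n => ?_⟩
    exact (step _ (e n)).choose_spec
  have mono : ∀ n m, n ≤ m → (seq n).1.1 ⊆ (seq m).1.1 ∧
      ∀ a ∈ (seq n).1.1, (seq m).1.2 a = (seq n).1.2 a := by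
    intro n m h
    induction m, h using Nat.le_induction with
    | base => exact ⟨subset_rfl, fun _ _ => rfl⟩
    | succ m hm ih =>
      exact ⟨ih.1.trans (hseqS m).1,
        fun a ha => ((hseqS m).2.1 a (ih.1 ha)).trans (ih.2 a ha)⟩
  have memx : ∀ x : X, ∃ n, x ∈ (seq n).1.1 := by
    intro x
    obtain ⟨n, rfl⟩ := he x
    exact ⟨n + 1, (hseqS n).2.2.1⟩
  let Ψ : X → X := fun x => (seq (memx x).choose).1.2 x
  have eval : ∀ (x : X) (n : ℕ), x ∈ (seq n).1.1 → Ψ x = (seq n).1.2 x := by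
    intro x n hx
    have hk : x ∈ (seq (memx x).choose).1.1 := (memx x).choose_spec
    have h1 := (mono _ (max (memx x).choose n) (le_max_left _ _)).2 x hk
    have h2 := (mono n (max (memx x).choose n) (le_max_right _ _)).2 x hx
    show (seq (memx x).choose).1.2 x = (seq n).1.2 x
    rw [← h1, h2]
  have hiso : Isometry Ψ := by
    refine Isometry.of_dist_eq fun x y => ?_
    obtain ⟨n, hn⟩ := memx x
    obtain ⟨m, hm⟩ := memx y
    have hxN : x ∈ (seq (max n m)).1.1 := (mono n _ (le_max_left _ _)).1 hn
    have hyN : y ∈ (seq (max n m)).1.1 := (mono m _ (le_max_right _ _)).1 hm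
    rw [eval x _ hxN, eval y _ hyN]
    exact (seq (max n m)).2.2 x hxN y hyN
  have hsurj : Function.Surjective Ψ := by
    intro c
    obtain ⟨n, rfl⟩ := he c
    obtain ⟨a, ha, hga⟩ := (hseqS n).2.2.2
    exact ⟨a, (eval a (n+1) ha).trans hga⟩
  refine ⟨⟨Equiv.ofBijective Ψ ⟨hiso.injective, hsurj⟩, hiso⟩, fun a ha => ?_⟩
  show Ψ a = g₀ a
  have : a ∈ (seq 0).1.1 := by rw [hseq0]; exact ha
  rw [eval a 0 this, hseq0]

end aux12

/-- A countable metric space is ultrahomogeneous iff every Katětov map over a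
finite subspace which is realized somewhere in `X` is realized over that
subspace. -/
theorem stmt12 (X : Type) [MetricSpace X] (hX : Countable X) :
    IsUltrahomogeneous X ↔
    ∀ F : Set X, F.Finite → ∀ f : X → ℝ,
      (∀ x ∈ F, 0 < f x) →
      (∀ x ∈ F, ∀ x' ∈ F, |f x - f x'| ≤ dist x x' ∧ dist x x' ≤ f x + f x') →
      (∃ (φ : F → X) (z : X), Isometry φ ∧ ∀ x : F, dist (φ x) z = f x) →
      ∃ y : X, ∀ x ∈ F, dist x y = f x := by
  constructor
  · rintro hU F hF f hpos hkat ⟨φ, z, hφ, hz⟩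
    obtain ⟨ψ, hψ⟩ := hU F hF φ hφ
    refine ⟨ψ.symm z, fun x hx => ?_⟩
    calc dist x (ψ.symm z) = dist (ψ x) (ψ (ψ.symm z)) := (ψ.dist_eq _ _).symm
      _ = dist (φ ⟨x, hx⟩) z := by rw [ψ.apply_symm_apply, hψ ⟨x, hx⟩]
      _ = f x := hz ⟨x, hx⟩
  · intro hyp F hF φ hφ
    cases isEmpty_or_nonempty X with
    | inl h => exact ⟨IsometryEquiv.refl X, fun x => (h.false x.1).elim⟩
    | inr h =>
      classical
      set g₀ : X → X := fun x => if h : x ∈ F then φ ⟨x, h⟩ else x with hg₀def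
      have hg₀ : ∀ a ∈ F, ∀ a' ∈ F, dist (g₀ a) (g₀ a') = dist a a' := by
        intro a ha a' ha'
        simp only [hg₀def, dif_pos ha, dif_pos ha']
        rw [hφ.dist_eq ⟨a, ha⟩ ⟨a', ha'⟩, Subtype.dist_eq]
      obtain ⟨ψ, hψ⟩ := backforth hyp F hF g₀ hg₀
      refine ⟨ψ, fun x => ?_⟩
      rw [hψ x.1 x.2]
      simp only [hg₀def, dif_pos x.2]
end

section
/- Let G be a countable simple graph with the Rado extension property: for all disjoint finite sets A and B of vertices there exists a vertex v ∉ A ∪ B adjacent to every vertex of A and to no vertex of B. Then G is indivisible: for every positive integer k and every map χ from the vertices of G to {0,…,k−1} there exist i < k and a set W of vertices with χ constant equal to i on W such that the induced subgraph of G on W is isomorphic to G. -/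
open Metric


namespace RadoAux

variable {X Y : Type}

/-- The Rado extension property for a graph. -/
def ExtProp {X : Type} (G : SimpleGraph X) : Prop :=
  ∀ A B : Finset X, Disjoint A B →
    ∃ v : X, v ∉ A ∧ v ∉ B ∧ (∀ a ∈ A, G.Adj v a) ∧ ∀ b ∈ B, ¬ G.Adj v b

/-- Invariant for a finite partial isomorphism encoded as a list of pairs. -/
def Inv (G₁ : SimpleGraph X) (G₂ : SimpleGraph Y) (L : List (X × Y)) : Prop :=
  (L.map Prod.fst).Nodup ∧ (L.map Prod.snd).Nodup ∧
    ∀ p ∈ L, ∀ q ∈ L, (G₁.Adj p.1 q.1 ↔ G₂.Adj p.2 q.2)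

lemma inv_swap {G₁ : SimpleGraph X} {G₂ : SimpleGraph Y} {L : List (X × Y)}
    (h : Inv G₁ G₂ L) : Inv G₂ G₁ (L.map Prod.swap) := by
  obtain ⟨h1, h2, h3⟩ := h
  refine ⟨?_, ?_, ?_⟩
  · simpa [List.map_map, Function.comp_def] using h2
  · simpa [List.map_map, Function.comp_def] using h1
  · intro p hp q hq
    simp only [List.mem_map] at hp hq
    obtain ⟨p', hp', rfl⟩ := hp
    obtain ⟨q', hq', rfl⟩ := hq
    exact (h3 p' hp' q' hq').symm

lemma extend_right (G₁ : SimpleGraph X) (G₂ : SimpleGraph Y) (h₂ : ExtProp G₂)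
    (L : List (X × Y)) (h : Inv G₁ G₂ L) (x : X) (hx : x ∉ L.map Prod.fst) :
    ∃ y, Inv G₁ G₂ ((x, y) :: L) := by
  classical
  obtain ⟨h1, h2, h3⟩ := h
  have hinj : ∀ ⦃p⦄, p ∈ L → ∀ ⦃q⦄, q ∈ L → Prod.snd p = Prod.snd q → p = q :=
    List.inj_on_of_nodup_map h2
  set A : Finset Y := (L.toFinset.filter fun p => G₁.Adj x p.1).image Prod.snd with hA
  set B : Finset Y := (L.toFinset.filter fun p => ¬ G₁.Adj x p.1).image Prod.snd with hB
  have hAmem : ∀ p ∈ L, G₁.Adj x p.1 → p.2 ∈ A := by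
    intro p hp hadj
    simp only [hA, Finset.mem_image, Finset.mem_filter, List.mem_toFinset]
    exact ⟨p, ⟨hp, hadj⟩, rfl⟩
  have hBmem : ∀ p ∈ L, ¬ G₁.Adj x p.1 → p.2 ∈ B := by
    intro p hp hadj
    simp only [hB, Finset.mem_image, Finset.mem_filter, List.mem_toFinset]
    exact ⟨p, ⟨hp, hadj⟩, rfl⟩
  have hdisj : Disjoint A B := by
    rw [Finset.disjoint_left]
    intro y hyA hyB
    simp only [hA, hB, Finset.mem_image, Finset.mem_filter, List.mem_toFinset] at hyA hyB
    obtain ⟨p, ⟨hp, hpadj⟩, hpy⟩ := hyA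
    obtain ⟨q, ⟨hq, hqadj⟩, hqy⟩ := hyB
    exact hqadj (by rw [← hinj hp hq (hpy.trans hqy.symm)]; exact hpadj)
  obtain ⟨v, hvA, hvB, hadj, hnadj⟩ := h₂ A B hdisj
  have hvmatch : ∀ p ∈ L, (G₁.Adj x p.1 ↔ G₂.Adj v p.2) := by
    intro p hp
    by_cases hc : G₁.Adj x p.1
    · exact ⟨fun _ => hadj p.2 (hAmem p hp hc), fun _ => hc⟩
    · exact ⟨fun hh => absurd hh hc, fun hh => absurd hh (hnadj p.2 (hBmem p hp hc))⟩
  have hvsnd : v ∉ L.map Prod.snd := by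
    intro hmem
    obtain ⟨p, hp, hpv⟩ := List.mem_map.1 hmem
    by_cases hc : G₁.Adj x p.1
    · exact hvA (hpv ▸ hAmem p hp hc)
    · exact hvB (hpv ▸ hBmem p hp hc)
  refine ⟨v, ?_, ?_, ?_⟩
  · rw [List.map_cons, List.nodup_cons]; exact ⟨hx, h1⟩
  · rw [List.map_cons, List.nodup_cons]; exact ⟨hvsnd, h2⟩
  · intro p hp q hq
    rcases List.mem_cons.1 hp with rfl | hp' <;> rcases List.mem_cons.1 hq with rfl | hq'
    · simp
    · exact hvmatch q hq'
    · rw [G₁.adj_comm, G₂.adj_comm]; exact hvmatch p hp'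
    · exact h3 p hp' q hq'

lemma step_ex (G₁ : SimpleGraph X) (G₂ : SimpleGraph Y) (h₁ : ExtProp G₁) (h₂ : ExtProp G₂)
    (ex : ℕ → X) (ey : ℕ → Y) (n : ℕ) (L : List (X × Y)) (h : Inv G₁ G₂ L) :
    ∃ L', Inv G₁ G₂ L' ∧ (∀ p ∈ L, p ∈ L') ∧
      (∀ m, n = 2*m → ex m ∈ L'.map Prod.fst) ∧
      (∀ m, n = 2*m+1 → ey m ∈ L'.map Prod.snd) := by
  classical
  rcases Nat.even_or_odd n with ⟨m, hm⟩ | ⟨m, hm⟩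
  · by_cases hmem : ex m ∈ L.map Prod.fst
    · refine ⟨L, h, fun p hp => hp, fun m' hm' => ?_, fun m' hm' => by omega⟩
      have : m' = m := by omega
      subst this; exact hmem
    · obtain ⟨y, hy⟩ := extend_right G₁ G₂ h₂ L h (ex m) hmem
      refine ⟨(ex m, y) :: L, hy, fun p hp => List.mem_cons_of_mem _ hp, ?_,
        fun m' hm' => by omega⟩
      intro m' hm'
      have : m' = m := by omega
      subst this; simp
  · by_cases hmem : ey m ∈ L.map Prod.snd
    · refine ⟨L, h, fun p hp => hp, fun m' hm' => by omega, fun m' hm' => ?_⟩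
      have : m' = m := by omega
      subst this; exact hmem
    · have hmem' : ey m ∉ (L.map Prod.swap).map Prod.fst := by
        simpa [List.map_map, Function.comp_def] using hmem
      obtain ⟨x, hx⟩ := extend_right G₂ G₁ h₁ (L.map Prod.swap) (inv_swap h) (ey m) hmem'
      have hx' : Inv G₁ G₂ ((x, ey m) :: L) := by
        have h2 := inv_swap hx
        simpa [List.map_map, Function.comp_def] using h2
      refine ⟨(x, ey m) :: L, hx', fun p hp => List.mem_cons_of_mem _ hp,
        fun m' hm' => by omega, ?_⟩
      intro m' hm'
      have : m' = m := by omega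
      subst this; simp

/-- The back-and-forth chain. -/
noncomputable def chain (G₁ : SimpleGraph X) (G₂ : SimpleGraph Y)
    (h₁ : ExtProp G₁) (h₂ : ExtProp G₂) (ex : ℕ → X) (ey : ℕ → Y) :
    ℕ → {L : List (X × Y) // Inv G₁ G₂ L}
  | 0 => ⟨[], by exact ⟨by simp, by simp, fun p hp => by simp at hp⟩⟩
  | n + 1 =>
    ⟨(step_ex G₁ G₂ h₁ h₂ ex ey n (chain G₁ G₂ h₁ h₂ ex ey n).1
        (chain G₁ G₂ h₁ h₂ ex ey n).2).choose,
     (step_ex G₁ G₂ h₁ h₂ ex ey n (chain G₁ G₂ h₁ h₂ ex ey n).1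
        (chain G₁ G₂ h₁ h₂ ex ey n).2).choose_spec.1⟩

variable {G₁ : SimpleGraph X} {G₂ : SimpleGraph Y}
  {h₁ : ExtProp G₁} {h₂ : ExtProp G₂} {ex : ℕ → X} {ey : ℕ → Y}

lemma chain_succ_spec (n : ℕ) :
    (∀ p ∈ (chain G₁ G₂ h₁ h₂ ex ey n).1, p ∈ (chain G₁ G₂ h₁ h₂ ex ey (n+1)).1) ∧
      (∀ m, n = 2*m → ex m ∈ (chain G₁ G₂ h₁ h₂ ex ey (n+1)).1.map Prod.fst) ∧
      (∀ m, n = 2*m+1 → ey m ∈ (chain G₁ G₂ h₁ h₂ ex ey (n+1)).1.map Prod.snd) :=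
  (step_ex G₁ G₂ h₁ h₂ ex ey n (chain G₁ G₂ h₁ h₂ ex ey n).1
    (chain G₁ G₂ h₁ h₂ ex ey n).2).choose_spec.2

lemma chain_le {m n : ℕ} (hmn : m ≤ n) :
    ∀ p ∈ (chain G₁ G₂ h₁ h₂ ex ey m).1, p ∈ (chain G₁ G₂ h₁ h₂ ex ey n).1 := by
  induction hmn with
  | refl => exact fun p hp => hp
  | step h ih => exact fun p hp => (chain_succ_spec _).1 p (ih p hp)

lemma iso_of_extProp {X Y : Type} [Countable X] [Countable Y]
    (G₁ : SimpleGraph X) (G₂ : SimpleGraph Y) (h₁ : ExtProp G₁) (h₂ : ExtProp G₂) :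
    Nonempty (G₁ ≃g G₂) := by
  classical
  have hX : Nonempty X := ⟨(h₁ ∅ ∅ (by simp)).choose⟩
  have hY : Nonempty Y := ⟨(h₂ ∅ ∅ (by simp)).choose⟩
  obtain ⟨ex, hex⟩ := exists_surjective_nat X
  obtain ⟨ey, hey⟩ := exists_surjective_nat Y
  set C : ℕ → {L : List (X × Y) // Inv G₁ G₂ L} := chain G₁ G₂ h₁ h₂ ex ey with hC
  -- uniqueness of matches
  have huy : ∀ {x y y' n n'}, (x, y) ∈ (C n).1 → (x, y') ∈ (C n').1 → y = y' := by
    intro x y y' n n' hy hy'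
    have h1 := chain_le (le_max_left n n') _ hy
    have h2 := chain_le (le_max_right n n') _ hy'
    have := List.inj_on_of_nodup_map (C (max n n')).2.1 h1 h2 rfl
    exact congrArg Prod.snd this
  have hux : ∀ {x x' y n n'}, (x, y) ∈ (C n).1 → (x', y) ∈ (C n').1 → x = x' := by
    intro x x' y n n' hy hy'
    have h1 := chain_le (le_max_left n n') _ hy
    have h2 := chain_le (le_max_right n n') _ hy'
    have := List.inj_on_of_nodup_map (C (max n n')).2.2.1 h1 h2 rfl
    exact congrArg Prod.fst this
  -- existence of matches
  have hxex : ∀ x : X, ∃ y, ∃ n, (x, y) ∈ (C n).1 := by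
    intro x
    obtain ⟨m, rfl⟩ := hex x
    have := (chain_succ_spec (G₁ := G₁) (G₂ := G₂) (h₁ := h₁) (h₂ := h₂)
      (ex := ex) (ey := ey) (2*m)).2.1 m rfl
    obtain ⟨p, hp, hp1⟩ := List.mem_map.1 this
    exact ⟨p.2, 2*m+1, by rw [← hp1]; exact hp⟩
  have hyex : ∀ y : Y, ∃ x, ∃ n, (x, y) ∈ (C n).1 := by
    intro y
    obtain ⟨m, rfl⟩ := hey y
    have := (chain_succ_spec (G₁ := G₁) (G₂ := G₂) (h₁ := h₁) (h₂ := h₂)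
      (ex := ex) (ey := ey) (2*m+1)).2.2 m rfl
    obtain ⟨p, hp, hp2⟩ := List.mem_map.1 this
    exact ⟨p.1, 2*m+2, by rw [← hp2]; exact hp⟩
  let f : X → Y := fun x => (hxex x).choose
  let g : Y → X := fun y => (hyex y).choose
  have hf : ∀ x, ∃ n, (x, f x) ∈ (C n).1 := fun x => (hxex x).choose_spec
  have hg : ∀ y, ∃ n, (g y, y) ∈ (C n).1 := fun y => (hyex y).choose_spec
  have hgf : ∀ x, g (f x) = x := by
    intro x
    obtain ⟨n, hn⟩ := hf x
    obtain ⟨n', hn'⟩ := hg (f x)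
    exact (hux hn' hn)
  have hfg : ∀ y, f (g y) = y := by
    intro y
    obtain ⟨n, hn⟩ := hg y
    obtain ⟨n', hn'⟩ := hf (g y)
    exact (huy hn' hn)
  refine ⟨⟨⟨f, g, hgf, hfg⟩, ?_⟩⟩
  intro a b
  obtain ⟨n, hn⟩ := hf a
  obtain ⟨n', hn'⟩ := hf b
  have h1 := chain_le (le_max_left n n') _ hn
  have h2 := chain_le (le_max_right n n') _ hn'
  exact ((C (max n n')).2.2.2 _ h1 _ h2).symm

end RadoAux

namespace RadoAux2

def ExtProp {X : Type} (G : SimpleGraph X) : Prop :=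
  ∀ A B : Finset X, Disjoint A B →
    ∃ v : X, v ∉ A ∧ v ∉ B ∧ (∀ a ∈ A, G.Adj v a) ∧ ∀ b ∈ B, ¬ G.Adj v b

variable {V : Type} [DecidableEq V] (G : SimpleGraph V)

/-- `Good S A₀ B₀`: for all finite disjoint `A B` avoiding `A₀ ∪ B₀`, there is a
vertex of `S` realizing the pattern (adjacent to `A ∪ A₀`, not to `B ∪ B₀`). -/
def Good (S : Set V) (A₀ B₀ : Finset V) : Prop :=
  ∀ A B : Finset V, Disjoint A B → Disjoint A (A₀ ∪ B₀) → Disjoint B (A₀ ∪ B₀) →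
    ∃ v ∈ S, v ∉ A ∧ v ∉ B ∧ v ∉ A₀ ∧ v ∉ B₀ ∧
      (∀ a ∈ A ∪ A₀, G.Adj v a) ∧ ∀ b ∈ B ∪ B₀, ¬ G.Adj v b

lemma good_step {S T : Set V} {A₀ B₀ : Finset V} (hS : Good G S A₀ B₀)
    (hT : ¬ Good G (S ∩ T) A₀ B₀) : ∃ A B, Good G (S \ T) A B := by
  rw [Good] at hT
  push_neg at hT
  obtain ⟨A₁, B₁, hd, hdA, hdB, hno⟩ := hT
  refine ⟨A₀ ∪ A₁, B₀ ∪ B₁, ?_⟩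
  intro A B hAB hA hB
  have mA : ∀ x ∈ A, x ∉ A₀ ∧ x ∉ A₁ ∧ x ∉ B₀ ∧ x ∉ B₁ := by
    intro x hx
    have := Finset.disjoint_left.1 hA hx
    simp only [Finset.mem_union, not_or] at this
    tauto
  have mB : ∀ x ∈ B, x ∉ A₀ ∧ x ∉ A₁ ∧ x ∉ B₀ ∧ x ∉ B₁ := by
    intro x hx
    have := Finset.disjoint_left.1 hB hx
    simp only [Finset.mem_union, not_or] at this
    tauto
  have mdA : ∀ x ∈ A₁, x ∉ A₀ ∧ x ∉ B₀ := by
    intro x hx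
    have := Finset.disjoint_left.1 hdA hx
    simp only [Finset.mem_union, not_or] at this
    tauto
  have mdB : ∀ x ∈ B₁, x ∉ A₀ ∧ x ∉ B₀ := by
    intro x hx
    have := Finset.disjoint_left.1 hdB hx
    simp only [Finset.mem_union, not_or] at this
    tauto
  have h1 : Disjoint (A ∪ A₁) (B ∪ B₁) := by
    rw [Finset.disjoint_left]
    intro x hx hy
    simp only [Finset.mem_union] at hx hy
    rcases hx with hx | hx
    · rcases hy with hy | hy
      · exact Finset.disjoint_left.1 hAB hx hy
      · exact (mA x hx).2.2.2 hy
    · rcases hy with hy | hy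
      · exact (mB x hy).2.1 hx
      · exact Finset.disjoint_left.1 hd hx hy
  have h2 : Disjoint (A ∪ A₁) (A₀ ∪ B₀) := by
    rw [Finset.disjoint_left]
    intro x hx hy
    simp only [Finset.mem_union] at hx hy
    rcases hx with hx | hx
    · rcases hy with hy | hy
      · exact (mA x hx).1 hy
      · exact (mA x hx).2.2.1 hy
    · rcases hy with hy | hy
      · exact (mdA x hx).1 hy
      · exact (mdA x hx).2 hy
  have h3 : Disjoint (B ∪ B₁) (A₀ ∪ B₀) := by
    rw [Finset.disjoint_left]
    intro x hx hy
    simp only [Finset.mem_union] at hx hy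
    rcases hx with hx | hx
    · rcases hy with hy | hy
      · exact (mB x hx).1 hy
      · exact (mB x hx).2.2.1 hy
    · rcases hy with hy | hy
      · exact (mdB x hx).1 hy
      · exact (mdB x hx).2 hy
  obtain ⟨v, hvS, hv1, hv2, hv3, hv4, hadj, hnadj⟩ := hS (A ∪ A₁) (B ∪ B₁) h1 h2 h3
  simp only [Finset.mem_union, not_or] at hv1 hv2
  have hvT : v ∉ T := by
    intro hvT
    obtain ⟨b, hb, hbadj⟩ := hno v ⟨hvS, hvT⟩ hv1.2 hv2.2 hv3 hv4
      (fun a ha => hadj a (by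
        simp only [Finset.mem_union] at ha ⊢; tauto))
    exact hnadj b (by simp only [Finset.mem_union] at hb ⊢; tauto) hbadj
  refine ⟨v, ⟨hvS, hvT⟩, hv1.1, hv2.1, ?_, ?_, ?_, ?_⟩
  · simp only [Finset.mem_union]; tauto
  · simp only [Finset.mem_union]; tauto
  · intro a ha
    exact hadj a (by simp only [Finset.mem_union] at ha ⊢; tauto)
  · intro b hb
    exact hnadj b (by simp only [Finset.mem_union] at hb ⊢; tauto)

lemma exists_good_color {k : ℕ} (χ : V → Fin k) :
    ∀ s : Finset (Fin k), ∀ A₀ B₀ : Finset V, Good G {v | χ v ∈ s} A₀ B₀ →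
      ∃ i A B, Good G {v | χ v = i} A B := by
  intro s
  induction s using Finset.strongInduction with
  | _ s ih =>
    intro A₀ B₀ h
    obtain ⟨v, hv, -⟩ := h ∅ ∅ (by simp) (by simp) (by simp)
    have hv : χ v ∈ s := hv
    by_cases hgi : Good G ({w | χ w ∈ s} ∩ {w | χ w = χ v}) A₀ B₀
    · refine ⟨χ v, A₀, B₀, ?_⟩
      have hEq : {w | χ w ∈ s} ∩ {w | χ w = χ v} = {w | χ w = χ v} := by
        ext w
        simp only [Set.mem_inter_iff, Set.mem_setOf_eq, and_iff_right_iff_imp]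
        intro hw; rw [hw]; exact hv
      rwa [hEq] at hgi
    · obtain ⟨A, B, hAB⟩ := good_step G h hgi
      have hset : {w | χ w ∈ s} \ {w | χ w = χ v} = {w | χ w ∈ s.erase (χ v)} := by
        ext w
        simp only [Set.mem_diff, Set.mem_setOf_eq, Finset.mem_erase]
        tauto
      rw [hset] at hAB
      exact ih (s.erase (χ v)) (Finset.erase_ssubset hv) A B hAB

end RadoAux2


/-- The Rado graph is indivisible: every countable graph with the Rado
extension property is indivisible. -/
theorem stmt16 (V : Type) [Countable V] (G : SimpleGraph V)
    (hext : ∀ A B : Finset V, Disjoint A B →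
      ∃ v : V, v ∉ A ∧ v ∉ B ∧ (∀ a ∈ A, G.Adj v a) ∧ ∀ b ∈ B, ¬ G.Adj v b)
    (k : ℕ) (hk : 0 < k) (χ : V → Fin k) :
    ∃ (i : Fin k) (W : Set V), (∀ w ∈ W, χ w = i) ∧
      Nonempty (G.induce W ≃g G) := by
  classical
  -- Step 1: the uniform extension property gives `Good` for the whole vertex set.
  have hgood0 : RadoAux2.Good G {v | χ v ∈ (Finset.univ : Finset (Fin k))} ∅ ∅ := by
    intro A B hAB _ _
    obtain ⟨v, h1, h2, h3, h4⟩ := hext A B hAB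
    refine ⟨v, by simp, h1, h2, by simp, by simp, ?_, ?_⟩
    · intro a ha
      exact h3 a (by simpa using ha)
    · intro b hb
      exact h4 b (by simpa using hb)
  -- Step 2: find a color class that is `Good` relative to some finite pattern.
  obtain ⟨i, A, B, hg⟩ := RadoAux2.exists_good_color G χ Finset.univ ∅ ∅ hgood0
  -- Step 3: the set of vertices of color `i` realizing the pattern.
  set W : Set V := {v | χ v = i ∧ v ∉ A ∧ v ∉ B ∧ (∀ a ∈ A, G.Adj v a) ∧
    ∀ b ∈ B, ¬ G.Adj v b} with hW
  refine ⟨i, W, fun w hw => hw.1, ?_⟩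
  have hWext : RadoAux.ExtProp (G.induce W) := by
    intro A' B' hd
    set A'' : Finset V := A'.map (Function.Embedding.subtype _) with hA''
    set B'' : Finset V := B'.map (Function.Embedding.subtype _) with hB''
    have hmemA : ∀ x ∈ A'', x ∈ W := by
      intro x hx
      obtain ⟨a, _, rfl⟩ := Finset.mem_map.1 hx
      exact a.2
    have hmemB : ∀ x ∈ B'', x ∈ W := by
      intro x hx
      obtain ⟨b, _, rfl⟩ := Finset.mem_map.1 hx
      exact b.2
    have hd'' : Disjoint A'' B'' := by
      rw [Finset.disjoint_left]
      intro x hx hy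
      obtain ⟨a, ha, rfl⟩ := Finset.mem_map.1 hx
      obtain ⟨b, hb, hba⟩ := Finset.mem_map.1 hy
      have : b = a := Subtype.ext hba
      subst this
      exact Finset.disjoint_left.1 hd ha hb
    have h1 : Disjoint A'' (A ∪ B) := by
      rw [Finset.disjoint_left]
      intro x hx hy
      have hxW := hmemA x hx
      rcases Finset.mem_union.1 hy with hy | hy
      · exact hxW.2.1 hy
      · exact hxW.2.2.1 hy
    have h2 : Disjoint B'' (A ∪ B) := by
      rw [Finset.disjoint_left]
      intro x hx hy
      have hxW := hmemB x hx
      rcases Finset.mem_union.1 hy with hy | hy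
      · exact hxW.2.1 hy
      · exact hxW.2.2.1 hy
    obtain ⟨v, hvi, hvA'', hvB'', hvA, hvB, hadj, hnadj⟩ := hg A'' B'' hd'' h1 h2
    have hvW : v ∈ W :=
      ⟨hvi, hvA, hvB, fun a ha => hadj a (Finset.mem_union_right _ ha),
        fun b hb => hnadj b (Finset.mem_union_right _ hb)⟩
    refine ⟨⟨v, hvW⟩, ?_, ?_, ?_, ?_⟩
    · intro hmem
      exact hvA'' (Finset.mem_map.2 ⟨⟨v, hvW⟩, hmem, rfl⟩)
    · intro hmem
      exact hvB'' (Finset.mem_map.2 ⟨⟨v, hvW⟩, hmem, rfl⟩)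
    · intro a ha
      exact hadj a.1 (Finset.mem_union_left _ (Finset.mem_map.2 ⟨a, ha, rfl⟩))
    · intro b hb
      exact hnadj b.1 (Finset.mem_union_left _ (Finset.mem_map.2 ⟨b, hb, rfl⟩))
  exact RadoAux.iso_of_extProp (G.induce W) G hWext hext
end

section
/- Let m be a positive integer, let S_Q be a rational Urysohn sphere, and let S_m be a countable ultrahomogeneous metric space with all distances in [0,1]_m into which every countable metric space with distances in [0,1]_m embeds isometrically. Assume that for every positive integer k and every map χ : S_Q → {0,…,k−1} there is a subset of S_Q isometric to S_m on which χ is constant. Then S_m is indivisible. -/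
open Metric

/-- Type synonym for equipping a space with the rounded metric. -/
def Rounded (X : Type) : Type := X

/-- The identity map into the synonym. -/
def Rounded.mk {X : Type} (x : X) : Rounded X := x

/-- The identity map out of the synonym. -/
def Rounded.out {X : Type} (x : Rounded X) : X := x

/-- The rounded distance. -/
noncomputable def rdist (m : ℕ) {X : Type} [MetricSpace X] (x y : Rounded X) : ℝ :=
  (⌈(m : ℝ) * dist x.out y.out⌉ : ℝ) / m

noncomputable def roundedMetricSpace (m : ℕ) (hm : 0 < m) (X : Type) [MetricSpace X] :
    MetricSpace (Rounded X) :=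
  have hm' : (0:ℝ) < (m:ℝ) := by exact_mod_cast hm
  { dist := rdist m
    dist_self := fun x => by
      show rdist m x x = 0
      simp [rdist]
    dist_comm := fun x y => by
      show rdist m x y = rdist m y x
      unfold rdist; rw [dist_comm]
    dist_triangle := fun x y z => by
      show rdist m x z ≤ rdist m x y + rdist m y z
      unfold rdist
      rw [← add_div, div_le_div_iff_of_pos_right hm']
      have h1 : (m : ℝ) * dist x.out z.out ≤
          (m : ℝ) * dist x.out y.out + (m : ℝ) * dist y.out z.out := by
        rw [← mul_add]
        exact mul_le_mul_of_nonneg_left (dist_triangle _ _ _) (le_of_lt hm')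
      calc (⌈(m : ℝ) * dist x.out z.out⌉ : ℝ)
          ≤ (⌈(m : ℝ) * dist x.out y.out + (m : ℝ) * dist y.out z.out⌉ : ℝ) := by
            exact_mod_cast Int.ceil_le_ceil h1
        _ ≤ _ := by exact_mod_cast Int.ceil_add_le _ _
    eq_of_dist_eq_zero := fun {x y} hxy => by
      have hxy' : rdist m x y = 0 := hxy
      unfold rdist at hxy'
      have h0 : ⌈(m : ℝ) * dist x.out y.out⌉ = (0 : ℤ) := by
        rcases div_eq_zero_iff.mp hxy' with h | h
        · exact_mod_cast h
        · exact absurd h (ne_of_gt hm')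
      have h2 : (m : ℝ) * dist x.out y.out ≤ ((0:ℤ) : ℝ) := Int.ceil_le.mp (le_of_eq h0)
      have h3 : dist x.out y.out ≤ 0 := by
        by_contra hpos
        push_neg at hpos
        have hmul := mul_pos hm' hpos
        push_cast at h2
        clear hxy hxy'
        linarith
      exact (dist_le_zero.mp h3 : x.out = y.out) }

/-- If every finite coloring of `S_ℚ` admits a monochromatic copy of `S_m`,
then `S_m` is indivisible. -/
theorem stmt18 (m : ℕ) (hm : 0 < m)
    (SQ : Type) [MetricSpace SQ] (hSQ : IsRationalUrysohnSphere SQ)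
    (Sm : Type) [MetricSpace Sm] (hSm : IsUrysohnSphereM m Sm)
    (h : ∀ k : ℕ, 0 < k → ∀ χ : SQ → Fin k,
      ∃ e : Sm → SQ, Isometry e ∧ ∃ i : Fin k, ∀ x : Sm, χ (e x) = i) :
    Indivisible Sm := by
  intro k hk χ
  letI : MetricSpace (Rounded SQ) := roundedMetricSpace m hm SQ
  have hm' : (0:ℝ) < (m:ℝ) := by exact_mod_cast hm
  obtain ⟨hSQc, -, hSQd, -⟩ := hSQ
  obtain ⟨-, -, hSmd, hSmu⟩ := hSm
  have hcount : Countable (Rounded SQ) := hSQc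
  have hdd : ∀ a b : Rounded SQ, dist a b = (⌈(m : ℝ) * dist a.out b.out⌉ : ℝ) / m :=
    fun a b => rfl
  -- distances of the rounded space lie in distSetM m
  have hdist : ∀ a b : Rounded SQ, dist a b ∈ distSetM m := by
    intro a b
    obtain ⟨q, hq0, hq1, hq⟩ := hSQd a.out b.out
    have hnn : 0 ≤ ⌈(m : ℝ) * dist a.out b.out⌉ :=
      Int.ceil_nonneg (mul_nonneg (le_of_lt hm') dist_nonneg)
    refine ⟨(⌈(m : ℝ) * dist a.out b.out⌉).toNat, ?_, ?_⟩
    · have hle : (m : ℝ) * dist a.out b.out ≤ (m : ℝ) := by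
        rw [hq]
        calc (m:ℝ) * (q:ℝ) ≤ (m:ℝ) * 1 :=
              mul_le_mul_of_nonneg_left (by exact_mod_cast hq1) (le_of_lt hm')
          _ = m := mul_one _
      have hcm : ⌈(m : ℝ) * dist a.out b.out⌉ ≤ (m : ℤ) := by
        calc ⌈(m : ℝ) * dist a.out b.out⌉ ≤ ⌈((m:ℤ):ℝ)⌉ := by
              exact Int.ceil_le_ceil (by exact_mod_cast hle)
          _ = (m : ℤ) := Int.ceil_intCast (m : ℤ)
      omega
    · rw [hdd a b]
      congr 1
      exact_mod_cast (Int.toNat_of_nonneg hnn).symm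
  obtain ⟨g, hg⟩ := hSmu (Rounded SQ) hcount hdist
  obtain ⟨e, he, i, hei⟩ := h k hk (fun y => χ (g (Rounded.mk y)))
  refine ⟨i, fun z => g (Rounded.mk (e z)), ?_, fun z => hei z⟩
  apply Isometry.of_dist_eq
  intro x y
  rw [hg.dist_eq]
  rw [hdd (Rounded.mk (e x)) (Rounded.mk (e y))]
  have hout : dist (Rounded.mk (e x)).out (Rounded.mk (e y)).out = dist x y := he.dist_eq x y
  rw [hout]
  obtain ⟨j, hj, hjd⟩ := hSmd x y
  rw [hjd, mul_div_cancel₀ _ (ne_of_gt hm')]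
  norm_num
end

section
/- Let m be a positive integer and let C_m be the set of continuous functions from the Cantor space 2^ℕ (with the product topology) to the finite set [0,1]_m ⊂ ℝ, equipped with the supremum metric d(f,g) = sup_{x ∈ 2^ℕ} |f(x) − g(x)|. Then C_m is a countable metric space, and every countable metric space with all distances in [0,1]_m embeds isometrically into C_m. -/
open Metric

set_option linter.unusedSectionVars false
set_option linter.unusedVariables false
namespace Stmt19Aux

/-- multiples of 1/m (any sign) -/
def QQ (m : ℕ) (v : ℝ) : Prop := ∃ k : ℤ, v = (k : ℝ) / m

theorem qq_of_mem {m : ℕ} {v : ℝ} (h : v ∈ distSetM m) : QQ m v := by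
  obtain ⟨k, _, rfl⟩ := h; exact ⟨k, by push_cast; ring⟩

theorem mem_bounds {m : ℕ} (hm : 0 < m) {v : ℝ} (h : v ∈ distSetM m) : 0 ≤ v ∧ v ≤ 1 := by
  obtain ⟨k, hk, rfl⟩ := h
  have hm' : (0:ℝ) < m := by exact_mod_cast hm
  constructor
  · positivity
  · rw [div_le_one hm']; exact_mod_cast hk

theorem qq_zero (m : ℕ) : QQ m 0 := ⟨0, by simp⟩

theorem qq_one {m : ℕ} (hm : 0 < m) : QQ m 1 := by
  refine ⟨m, ?_⟩
  rw [eq_comm, div_eq_one_iff_eq]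
  · simp
  · exact_mod_cast hm.ne'

theorem qq_sub {m : ℕ} {a b : ℝ} (ha : QQ m a) (hb : QQ m b) : QQ m (a - b) := by
  obtain ⟨k, rfl⟩ := ha; obtain ⟨l, rfl⟩ := hb
  exact ⟨k - l, by push_cast; ring⟩

theorem qq_add {m : ℕ} {a b : ℝ} (ha : QQ m a) (hb : QQ m b) : QQ m (a + b) := by
  obtain ⟨k, rfl⟩ := ha; obtain ⟨l, rfl⟩ := hb
  exact ⟨k + l, by push_cast; ring⟩

theorem qq_max {m : ℕ} {a b : ℝ} (ha : QQ m a) (hb : QQ m b) : QQ m (max a b) := by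
  rcases max_choice a b with h | h <;> rw [h] <;> assumption

theorem qq_min {m : ℕ} {a b : ℝ} (ha : QQ m a) (hb : QQ m b) : QQ m (min a b) := by
  rcases min_choice a b with h | h <;> rw [h] <;> assumption

theorem mem_of_qq {m : ℕ} (hm : 0 < m) {v : ℝ} (hq : QQ m v) (h0 : 0 ≤ v) (h1 : v ≤ 1) :
    v ∈ distSetM m := by
  obtain ⟨k, rfl⟩ := hq
  have hm' : (0:ℝ) < m := by exact_mod_cast hm
  have hk0 : (0:ℤ) ≤ k := by
    by_contra hneg
    push_neg at hneg
    have : ((k:ℝ))/m < 0 := div_neg_of_neg_of_pos (by exact_mod_cast hneg) hm'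
    linarith
  have hkm : k ≤ (m:ℤ) := by
    rw [div_le_one hm'] at h1
    exact_mod_cast h1
  refine ⟨k.toNat, ?_, ?_⟩
  · omega
  · congr 1
    exact_mod_cast (Int.toNat_of_nonneg hk0).symm

theorem qq_fold_max {m : ℕ} {ι : Type*} (s : Finset ι) {c : ℝ} (hc : QQ m c)
    {g : ι → ℝ} (hg : ∀ i ∈ s, QQ m (g i)) : QQ m (s.fold max c g) := by
  induction s using Finset.cons_induction with
  | empty => simpa using hc
  | cons a s ha ih =>
    rw [Finset.fold_cons]
    exact qq_max (hg a (Finset.mem_cons_self a s)) (ih fun i hi => hg i (Finset.mem_cons_of_mem hi))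

theorem qq_fold_min {m : ℕ} {ι : Type*} (s : Finset ι) {c : ℝ} (hc : QQ m c)
    {g : ι → ℝ} (hg : ∀ i ∈ s, QQ m (g i)) : QQ m (s.fold min c g) := by
  induction s using Finset.cons_induction with
  | empty => simpa using hc
  | cons a s ha ih =>
    rw [Finset.fold_cons]
    exact qq_min (hg a (Finset.mem_cons_self a s)) (ih fun i hi => hg i (Finset.mem_cons_of_mem hi))


noncomputable def vv (m n : ℕ) (x : ℕ → Bool) : ℝ :=
  (∑ i ∈ Finset.range m, if x (Nat.pair n i) then (1:ℝ) else 0) / m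

theorem vv_mem (m n : ℕ) (x : ℕ → Bool) : vv m n x ∈ distSetM m := by
  refine ⟨∑ i ∈ Finset.range m, if x (Nat.pair n i) then 1 else 0, ?_, ?_⟩
  · calc (∑ i ∈ Finset.range m, if x (Nat.pair n i) then 1 else 0)
        ≤ ∑ _i ∈ Finset.range m, 1 := Finset.sum_le_sum (fun i _ => by split <;> omega)
    _ = m := by simp
  · rw [vv]
    congr 1
    push_cast
    apply Finset.sum_congr rfl
    intro i _
    split <;> simp

theorem vv_cont (m n : ℕ) : Continuous (vv m n) := by
  apply Continuous.div_const
  apply continuous_finset_sum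
  intro i _
  exact Continuous.comp (continuous_of_discreteTopology
    (f := fun b : Bool => if b then (1:ℝ) else 0)) (continuous_apply (Nat.pair n i))

theorem sum_indicator_lt (K M : ℕ) (hKM : K ≤ M) :
    (∑ i ∈ Finset.range M, if i < K then (1:ℝ) else 0) = K := by
  induction M with
  | zero =>
    have : K = 0 := by omega
    subst this; simp
  | succ M ih =>
    rw [Finset.sum_range_succ]
    rcases Nat.lt_or_ge M K with h | h
    · have hK : K = M + 1 := by omega
      subst hK
      rw [if_pos h]
      have : (∑ i ∈ Finset.range M, if i < M + 1 then (1:ℝ) else 0)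
           = ∑ _i ∈ Finset.range M, (1:ℝ) := by
        apply Finset.sum_congr rfl; intro i hi
        rw [if_pos (by simp at hi; omega)]
      rw [this]; simp
    · rw [if_neg (by omega), ih (by omega)]; simp

theorem vv_realize (m : ℕ) (K : ℕ → ℕ) (hK : ∀ j, K j ≤ m) (j : ℕ) :
    vv m j (fun c => decide (c.unpair.2 < K c.unpair.1)) = (K j : ℝ) / m := by
  rw [vv]
  congr 1
  have : ∀ i, (if (decide ((Nat.pair j i).unpair.2 < K (Nat.pair j i).unpair.1) : Bool)
      then (1:ℝ) else 0) = if i < K j then (1:ℝ) else 0 := by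
    intro i
    simp [Nat.unpair_pair]
  rw [Finset.sum_congr rfl (fun i _ => this i)]
  exact sum_indicator_lt (K j) m (hK j)


section fs

theorem cont_fold_max {ι : Type*} (s : Finset ι) (c : ℝ) (g : ι → (ℕ → Bool) → ℝ)
    (hg : ∀ i ∈ s, Continuous (g i)) :
    Continuous fun x => s.fold max c (fun i => g i x) := by
  classical
  induction s using Finset.cons_induction with
  | empty => simpa using continuous_const
  | cons a s ha ih =>
    simp only [Finset.fold_cons]
    exact (hg a (Finset.mem_cons_self a s)).max (ih fun i hi => hg i (Finset.mem_cons_of_mem hi))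

theorem cont_fold_min {ι : Type*} (s : Finset ι) (c : ℝ) (g : ι → (ℕ → Bool) → ℝ)
    (hg : ∀ i ∈ s, Continuous (g i)) :
    Continuous fun x => s.fold min c (fun i => g i x) := by
  classical
  induction s using Finset.cons_induction with
  | empty => simpa using continuous_const
  | cons a s ha ih =>
    simp only [Finset.fold_cons]
    exact (hg a (Finset.mem_cons_self a s)).min (ih fun i hi => hg i (Finset.mem_cons_of_mem hi))


variable {m : ℕ} (d : ℕ → ℕ → ℝ)

noncomputable def fs (m : ℕ) (d : ℕ → ℕ → ℝ) : ℕ → (ℕ → Bool) → ℝ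
  | n => fun x =>
    max (Finset.univ.fold max 0 (fun j : Fin n => fs m d j x - d j n))
        (min (vv m n x) (Finset.univ.fold min 1 (fun j : Fin n => fs m d j x + d j n)))
  termination_by n => n
  decreasing_by all_goals exact j.isLt

theorem fs_apply (m : ℕ) (d : ℕ → ℕ → ℝ) (n : ℕ) (x : ℕ → Bool) :
    fs m d n x
      = max (Finset.univ.fold max 0 (fun j : Fin n => fs m d j x - d j n))
        (min (vv m n x) (Finset.univ.fold min 1 (fun j : Fin n => fs m d j x + d j n))) := by
  rw [fs]

theorem fs_nonneg (n : ℕ) (x : ℕ → Bool) : 0 ≤ fs m d n x := by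
  rw [fs_apply]
  exact le_max_of_le_left ((Finset.le_fold_max _).2 (Or.inl le_rfl))

variable (hm : 0 < m) (hd : ∀ a b, d a b ∈ distSetM m)
include hm hd

theorem fs_mem : ∀ n x, fs m d n x ∈ distSetM m := by
  intro n
  induction n using Nat.strong_induction_on with
  | _ n ih =>
    intro x
    rw [fs_apply]
    have hd0 : ∀ a b, 0 ≤ d a b := fun a b => (mem_bounds hm (hd a b)).1
    apply mem_of_qq hm
    · apply qq_max
      · exact qq_fold_max _ (qq_zero m) (fun j _ =>
          qq_sub (qq_of_mem (ih j j.isLt x)) (qq_of_mem (hd j n)))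
      · apply qq_min (qq_of_mem (vv_mem m n x))
        exact qq_fold_min _ (qq_one hm) (fun j _ =>
          qq_add (qq_of_mem (ih j j.isLt x)) (qq_of_mem (hd j n)))
    · exact le_max_of_le_left ((Finset.le_fold_max _).2 (Or.inl le_rfl))
    · apply max_le
      · refine (Finset.fold_max_le _).2 ⟨zero_le_one, fun j _ => ?_⟩
        have h1 := (mem_bounds hm (ih j j.isLt x)).2
        have := hd0 j n
        linarith
      · exact le_trans (min_le_right _ _) ((Finset.fold_min_le _).2 (Or.inl le_rfl))

theorem fs_cont (n : ℕ) : Continuous (fs m d n) := by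
  induction n using Nat.strong_induction_on with
  | _ n ih =>
    have : fs m d n = fun x =>
        max (Finset.univ.fold max 0 (fun j : Fin n => fs m d j x - d j n))
          (min (vv m n x) (Finset.univ.fold min 1 (fun j : Fin n => fs m d j x + d j n))) := by
      funext x; rw [fs_apply]
    rw [this]
    apply Continuous.max
    · exact cont_fold_max Finset.univ 0 (fun j : Fin n => fun x => fs m d j x - d j n)
        (fun j _ => (ih j.1 j.2).sub continuous_const)
    · exact (vv_cont m n).min (cont_fold_min Finset.univ 1
        (fun j : Fin n => fun x => fs m d j x + d j n)
        (fun j _ => (ih j.1 j.2).add continuous_const))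

variable (hdsymm : ∀ a b, d a b = d b a) (hdtri : ∀ a b c, d a c ≤ d a b + d b c)
include hdsymm hdtri

theorem fs_dist_le : ∀ b a, a < b → ∀ x, |fs m d a x - fs m d b x| ≤ d a b := by
  have hd0 : ∀ a b, 0 ≤ d a b := fun a b => (mem_bounds hm (hd a b)).1
  have hd1 : ∀ (a : ℕ) (x : ℕ → Bool), fs m d a x ≤ 1 := fun a x => (mem_bounds hm (fs_mem d hm hd a x)).2
  intro b
  induction b using Nat.strong_induction_on with
  | _ b ih =>
    intro a hab x
    rw [abs_sub_le_iff]
    have hb := fs_apply m d b x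
    constructor
    · -- fs a x - fs b x ≤ d a b
      have : fs m d a x - d a b ≤ fs m d b x := by
        rw [hb]
        apply le_max_of_le_left
        exact (Finset.le_fold_max _).2 (Or.inr ⟨⟨a, hab⟩, Finset.mem_univ _, le_rfl⟩)
      linarith
    · -- fs b x - fs a x ≤ d a b
      have : fs m d b x ≤ fs m d a x + d a b := by
        rw [hb]
        apply max_le
        · refine (Finset.fold_max_le _).2 ⟨?_, fun j _ => ?_⟩
          · have := fs_nonneg (m := m) d a x; have := hd0 a b; linarith
          · -- fs j x - d j b ≤ fs a x + d a b
            rcases eq_or_ne (j : ℕ) a with hja | hja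
            · rw [hja]
              have := hd0 a b; have := hd0 j b; rw [hja] at this; linarith
            · have habs : |fs m d (j:ℕ) x - fs m d a x| ≤ d j a := by
                rcases Nat.lt_or_ge (j : ℕ) a with h | h
                · exact ih a hab _ h x
                · have hja' : a < (j:ℕ) := by omega
                  rw [abs_sub_comm, hdsymm (j:ℕ) a]
                  exact ih (j:ℕ) j.isLt a hja' x
              have htr : d (j:ℕ) a ≤ d j b + d a b := by
                have := hdtri (j:ℕ) b a
                rw [hdsymm b a] at this
                linarith
              have := abs_le.1 habs
              linarith [this.2]
        · refine le_trans (min_le_right _ _) ?_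
          exact (Finset.fold_min_le _).2 (Or.inr ⟨⟨a, hab⟩, Finset.mem_univ _, le_rfl⟩)
      linarith

variable (hdself : ∀ a, d a a = 0)
include hdself

theorem fs_realize (a b : ℕ) (hab : a < b) : ∃ x, fs m d a x - fs m d b x = d a b := by
  have hd0 : ∀ a b, 0 ≤ d a b := fun a b => (mem_bounds hm (hd a b)).1
  have hd1 : ∀ a b, d a b ≤ 1 := fun a b => (mem_bounds hm (hd a b)).2
  set t : ℕ → ℝ := fun j => min (d a b) (d j b) with ht
  have htmem : ∀ j, ∃ k : ℕ, k ≤ m ∧ t j = (k : ℝ) / m := by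
    intro j
    rcases min_choice (d a b) (d j b) with h | h
    · rw [ht]; simp only; rw [h]; exact hd a b
    · rw [ht]; simp only; rw [h]; exact hd j b
  set K : ℕ → ℕ := fun j => (htmem j).choose with hK
  have hKle : ∀ j, K j ≤ m := fun j => (htmem j).choose_spec.1
  have hKval : ∀ j, t j = (K j : ℝ) / m := fun j => (htmem j).choose_spec.2
  set x : ℕ → Bool := fun c => decide (c.unpair.2 < K c.unpair.1) with hx
  have hvv : ∀ j, vv m j x = t j := by
    intro j; rw [hx, vv_realize m K hKle j, hKval j]
  -- Lipschitz property of t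
  have htlip : ∀ j k, t j - t k ≤ d j k := by
    intro j k
    rcases le_total (d a b) (d k b) with h | h
    · have : t k = d a b := min_eq_left h
      have : t j ≤ d a b := min_le_left _ _
      have hk : t k = d a b := min_eq_left h
      rw [hk]
      have := hd0 j k
      linarith [min_le_left (d a b) (d j b)]
    · have hk : t k = d k b := min_eq_right h
      have hj : t j ≤ d j b := min_le_right _ _
      have : d j b ≤ d j k + d k b := hdtri j k b
      rw [hk]; linarith
  have ht0 : ∀ j, 0 ≤ t j := fun j => le_min (hd0 a b) (hd0 j b)
  have ht1 : ∀ j, t j ≤ 1 := fun j => le_trans (min_le_left _ _) (hd1 a b)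
  -- fs equals t at x
  have hfst : ∀ j, fs m d j x = t j := by
    intro j
    induction j using Nat.strong_induction_on with
    | _ j ih =>
      rw [fs_apply, hvv]
      have hL : Finset.univ.fold max 0 (fun k : Fin j => fs m d k x - d k j) ≤ t j := by
        refine (Finset.fold_max_le _).2 ⟨ht0 j, fun k _ => ?_⟩
        rw [ih k k.isLt]
        have := htlip (k : ℕ) j
        linarith
      have hU : t j ≤ Finset.univ.fold min 1 (fun k : Fin j => fs m d k x + d k j) := by
        refine (Finset.le_fold_min _).2 ⟨ht1 j, fun k _ => ?_⟩
        rw [ih k k.isLt]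
        have := htlip j (k : ℕ)
        rw [hdsymm j (k:ℕ)] at this
        linarith
      rw [min_eq_left hU, max_eq_right hL]
  refine ⟨x, ?_⟩
  rw [hfst a, hfst b]
  have hta : t a = d a b := by rw [ht]; simp
  have htb : t b = 0 := by
    rw [ht]; simp only
    rw [hdself b, min_eq_right (hd0 a b)]
  rw [hta, htb, sub_zero]

end fs

theorem universal (m : ℕ) (hm : 0 < m) (Y : Type) [MetricSpace Y] [hc : Countable Y]
    (hY : ∀ a b : Y, dist a b ∈ distSetM m) :
    ∃ e : Y → {f : C(ℕ → Bool, ℝ) // ∀ x : ℕ → Bool, f x ∈ distSetM m},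
      Isometry e := by
  rcases isEmpty_or_nonempty Y with hY0 | hY0
  · exact ⟨fun y => isEmptyElim y, fun y => isEmptyElim y⟩
  · obtain ⟨u, hu⟩ := exists_surjective_nat Y
    set d : ℕ → ℕ → ℝ := fun a b => dist (u a) (u b) with hdd
    have hd : ∀ a b, d a b ∈ distSetM m := fun a b => hY _ _
    have hdsymm : ∀ a b, d a b = d b a := fun a b => dist_comm _ _
    have hdtri : ∀ a b c, d a c ≤ d a b + d b c := fun a b c => dist_triangle _ _ _
    have hdself : ∀ a, d a a = 0 := fun a => dist_self _
    set G : ℕ → {f : C(ℕ → Bool, ℝ) // ∀ x : ℕ → Bool, f x ∈ distSetM m} :=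
      fun n => ⟨⟨fs m d n, fs_cont d hm hd n⟩, fun x => fs_mem d hm hd n x⟩ with hG
    have key : ∀ a b : ℕ, a < b → dist (G a) (G b) = d a b := by
      intro a b hab
      apply le_antisymm
      · rw [Subtype.dist_eq]
        refine (ContinuousMap.dist_le ((mem_bounds hm (hd a b)).1)).2 fun x => ?_
        rw [hG]
        simp only [ContinuousMap.coe_mk]
        rw [Real.dist_eq]
        exact fs_dist_le d hm hd hdsymm hdtri b a hab x
      · obtain ⟨x, hx⟩ := fs_realize d hm hd hdsymm hdtri hdself a b hab
        have h1 : dist ((G a).1 x) ((G b).1 x) ≤ dist (G a).1 (G b).1 :=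
          ContinuousMap.dist_apply_le_dist x
        rw [← Subtype.dist_eq] at h1
        refine le_trans ?_ h1
        rw [hG]
        simp only [ContinuousMap.coe_mk]
        rw [Real.dist_eq, ← hx]
        exact le_abs_self _
    have key' : ∀ a b : ℕ, dist (G a) (G b) = d a b := by
      intro a b
      rcases lt_trichotomy a b with h | h | h
      · exact key a b h
      · subst h; rw [dist_self, hdself]
      · rw [dist_comm, hdsymm]; exact key b a h
    refine ⟨fun y => G (hu y).choose, Isometry.of_dist_eq fun y1 y2 => ?_⟩
    calc dist (G (hu y1).choose) (G (hu y2).choose)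
        = d (hu y1).choose (hu y2).choose := key' _ _
      _ = dist (u (hu y1).choose) (u (hu y2).choose) := rfl
      _ = dist y1 y2 := by rw [(hu y1).choose_spec, (hu y2).choose_spec]

theorem gap {m : ℕ} (hm : 0 < m) {u v : ℝ} (hu : u ∈ distSetM m) (hv : v ∈ distSetM m)
    (h : |u - v| < 1 / m) : u = v := by
  obtain ⟨k, _, rfl⟩ := hu
  obtain ⟨l, _, rfl⟩ := hv
  have hm' : (0:ℝ) < m := by exact_mod_cast hm
  rw [div_sub_div_same] at h
  have h1 : |(k:ℝ) - l| < 1 := by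
    rw [abs_div, abs_of_pos hm'] at h
    exact (div_lt_div_iff_of_pos_right hm').1 h
  have h2 := abs_lt.1 h1
  have hk : k = l := by
    have ha : (k:ℝ) < l + 1 := by linarith
    have hb : (l:ℝ) < k + 1 := by linarith
    have ha' : k < l + 1 := by exact_mod_cast ha
    have hb' : l < k + 1 := by exact_mod_cast hb
    omega
  rw [hk]

theorem exists_finsupp {m : ℕ} (hm : 0 < m) (f : C(ℕ → Bool, ℝ))
    (hf : ∀ x, f x ∈ distSetM m) :
    ∃ n : ℕ, ∀ x y : ℕ → Bool, (∀ i, i < n → x i = y i) → f x = f y := by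
  have hm' : (0:ℝ) < m := by exact_mod_cast hm
  have hloc : ∀ x : ℕ → Bool, ∃ I : Finset ℕ, ∀ y, (∀ i ∈ I, y i = x i) → f y = f x := by
    intro x
    have h1 : f ⁻¹' (Metric.ball (f x) (1/m)) ∈ nhds x :=
      f.continuous.continuousAt (Metric.ball_mem_nhds _ (by positivity))
    rw [nhds_pi, Filter.mem_pi] at h1
    obtain ⟨I, hIfin, t, ht, hsub⟩ := h1
    refine ⟨hIfin.toFinset, fun y hy => ?_⟩
    have hyI : y ∈ I.pi t := by
      rw [Set.mem_pi]
      intro i hi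
      rw [hy i (hIfin.mem_toFinset.2 hi)]
      have := ht i
      rwa [nhds_discrete, Filter.mem_pure] at this
    have hball : f y ∈ Metric.ball (f x) (1/m) := hsub hyI
    refine gap hm (hf y) (hf x) ?_
    rw [← Real.dist_eq]
    exact Metric.mem_ball.1 hball
  classical
  set U : (ℕ → Bool) → Set (ℕ → Bool) := fun x => {y | ∀ i ∈ (hloc x).choose, y i = x i}
    with hU
  have hUopen : ∀ x, IsOpen (U x) := by
    intro x
    have : U x = ⋂ i ∈ (hloc x).choose, (fun y : ℕ → Bool => y i) ⁻¹' {x i} := by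
      ext y
      simp [hU]
    rw [this]
    exact isOpen_biInter_finset fun i _ =>
      (continuous_apply i).isOpen_preimage _ (isOpen_discrete _)
  have hcover : Set.univ ⊆ ⋃ x, U x := fun x _ => Set.mem_iUnion.2 ⟨x, fun i _ => rfl⟩
  obtain ⟨s, hs⟩ := isCompact_univ.elim_finite_subcover U hUopen hcover
  set N : ℕ := (s.sup fun x => (hloc x).choose.sup id) + 1 with hN
  refine ⟨N, fun x y hxy => ?_⟩
  obtain ⟨z, hzs, hxz⟩ : ∃ z ∈ s, x ∈ U z := by
    have := hs (Set.mem_univ x)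
    simpa using this
  have hfx : f x = f z := (hloc z).choose_spec x hxz
  have hyU : y ∈ U z := by
    intro i hi
    have hiN : i < N := by
      have h1 : i ≤ (hloc z).choose.sup id := Finset.le_sup (f := id) hi
      have h2 : (hloc z).choose.sup id ≤ s.sup fun x => (hloc x).choose.sup id :=
        Finset.le_sup (f := fun x => (hloc x).choose.sup id) hzs
      omega
    rw [← hxy i hiN]
    exact hxz i hi
  have hfy : f y = f z := (hloc z).choose_spec y hyU
  rw [hfx, hfy]

def extL (l : List Bool) : ℕ → Bool := fun i => l.getD i false

def vecs : ℕ → List (List Bool)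
  | 0 => [[]]
  | (n+1) => (vecs n).flatMap (fun l => [true :: l, false :: l])

theorem mem_vecs : ∀ l : List Bool, l ∈ vecs l.length := by
  intro l
  induction l with
  | nil => simp [vecs]
  | cons b l ih =>
    rw [List.length_cons, vecs, List.mem_flatMap]
    exact ⟨l, ih, by cases b <;> simp⟩

theorem extL_eq {n : ℕ} (x : ℕ → Bool) (i : ℕ) (hi : i < n) :
    extL ((List.range n).map x) i = x i := by
  rw [extL]
  simp only [List.getD_eq_getElem?_getD, List.getElem?_map, List.getElem?_range hi,
    Option.map_some, Option.getD_some]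

theorem countable_S (m : ℕ) (hm : 0 < m) :
    Countable {f : C(ℕ → Bool, ℝ) // ∀ x : ℕ → Bool, f x ∈ distSetM m} := by
  have hDcount : Countable (distSetM m) := by
    have hsub : distSetM m ⊆ Set.range (fun k : ℕ => (k:ℝ)/m) := by
      rintro v ⟨k, _, rfl⟩
      exact ⟨k, rfl⟩
    exact ((Set.countable_range _).mono hsub).to_subtype
  set nf : {f : C(ℕ → Bool, ℝ) // ∀ x : ℕ → Bool, f x ∈ distSetM m} → ℕ :=
    fun f => (exists_finsupp hm f.1 f.2).choose with hnf
  have hnfs : ∀ f, ∀ x y : ℕ → Bool, (∀ i, i < nf f → x i = y i) → f.1 x = f.1 y :=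
    fun f => (exists_finsupp hm f.1 f.2).choose_spec
  set Φ : {f : C(ℕ → Bool, ℝ) // ∀ x : ℕ → Bool, f x ∈ distSetM m} → ℕ × List (distSetM m) :=
    fun f => (nf f, (vecs (nf f)).map (fun l => ⟨f.1 (extL l), f.2 _⟩)) with hΦ
  have hinj : Function.Injective Φ := by
    intro f g h
    have h1 : nf f = nf g := congrArg Prod.fst h
    have h2 := congrArg Prod.snd h
    simp only [hΦ] at h2
    rw [← h1] at h2
    have h3 := List.map_eq_map_iff.1 h2
    apply Subtype.ext
    apply ContinuousMap.ext
    intro x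
    have hmem : (List.range (nf f)).map x ∈ vecs (nf f) := by
      have := mem_vecs ((List.range (nf f)).map x)
      rwa [List.length_map, List.length_range] at this
    have h4 := h3 _ hmem
    have h5 : f.1 (extL ((List.range (nf f)).map x)) = g.1 (extL ((List.range (nf f)).map x)) :=
      congrArg Subtype.val h4
    calc f.1 x = f.1 (extL ((List.range (nf f)).map x)) :=
          hnfs f x _ (fun i hi => (extL_eq x i hi).symm)
      _ = g.1 (extL ((List.range (nf f)).map x)) := h5
      _ = g.1 x := (hnfs g x _ (fun i hi => (extL_eq x i (h1 ▸ hi)).symm)).symm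
  exact hinj.countable

theorem dist_eq_sup (m : ℕ) (f g : {f : C(ℕ → Bool, ℝ) // ∀ x : ℕ → Bool, f x ∈ distSetM m}) :
    dist f g = ⨆ x : ℕ → Bool, |f.1 x - g.1 x| := by
  rw [Subtype.dist_eq, ← BoundedContinuousFunction.dist_mkOfCompact,
    BoundedContinuousFunction.dist_eq_iSup]
  refine iSup_congr fun x => ?_
  rw [BoundedContinuousFunction.mkOfCompact_apply, BoundedContinuousFunction.mkOfCompact_apply, Real.dist_eq]

end Stmt19Aux

/-- The space `C_m` of continuous maps from the Cantor space to `[0,1]_m` with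
the sup metric is countable and universal for countable metric spaces with
distances in `[0,1]_m`. -/
theorem stmt19 (m : ℕ) (hm : 0 < m) :
    Countable {f : C(ℕ → Bool, ℝ) // ∀ x : ℕ → Bool, f x ∈ distSetM m} ∧
    (∀ f g : {f : C(ℕ → Bool, ℝ) // ∀ x : ℕ → Bool, f x ∈ distSetM m},
      dist f g = ⨆ x : ℕ → Bool, |f.1 x - g.1 x|) ∧
    ∀ (Y : Type) [MetricSpace Y], Countable Y →
      (∀ a b : Y, dist a b ∈ distSetM m) →
      ∃ e : Y → {f : C(ℕ → Bool, ℝ) // ∀ x : ℕ → Bool, f x ∈ distSetM m},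
        Isometry e := by
  refine ⟨Stmt19Aux.countable_S m hm, fun f g => Stmt19Aux.dist_eq_sup m f g, ?_⟩
  intro Y _ hc hY
  exact @Stmt19Aux.universal m hm Y _ hc hY
end
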